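/- arXiv:2001.05420 — 7 statements merged into one kernel-verified Lean document; each statement's English description precedes it below -/
import Mathlib

section
/- Any auxiliary function in the Gumbel domain criterion is Beurling slowly varying: if F̄ : ℝ → (0,∞) is nonincreasing with F̄(t) → 0 as t → ∞, a : ℝ → (0,∞), and F̄(t + x a(t))/F̄(t) → e^{−x} as t → ∞ for every x ∈ ℝ, then a(t + x a(t))/a(t) → 1 as t → ∞ for every x ∈ ℝ, provided a is taken as a(t) := (∫_t^∞ F̄(u) du)/F̄(t) (assumed finite for all t). -/
open Filter Topology MeasureTheory Set

lemma bsv_geo {x : ℝ} (hx : 0 < x) {n : ℕ} (hn : 0 < n) :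
    1 - Real.exp (-x) ≤ (x/n) * ∑ k ∈ Finset.range n, Real.exp (-((k:ℝ)*(x/n)))
    ∧ (x/n) * ∑ k ∈ Finset.range n, Real.exp (-((k:ℝ)*(x/n)))
        ≤ (1 - Real.exp (-x)) * Real.exp (x/n) := by
  set h : ℝ := x/n with hh
  have hn' : (0:ℝ) < n := by exact_mod_cast hn
  have hh0 : 0 < h := by positivity
  have hq : Real.exp (-h) < 1 := Real.exp_lt_one_iff.2 (by linarith)
  have hsum : ∑ k ∈ Finset.range n, Real.exp (-((k:ℝ)*h))
      = (Real.exp (-h) ^ n - 1) / (Real.exp (-h) - 1) := by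
    rw [← geom_sum_eq (by linarith)]
    refine Finset.sum_congr rfl fun k _ => ?_
    rw [← Real.exp_nat_mul]; ring_nf
  have hqn : Real.exp (-h) ^ n = Real.exp (-x) := by
    rw [← Real.exp_nat_mul]
    congr 1
    rw [hh]; field_simp
  rw [hsum, hqn]
  set θ : ℝ := 1 - Real.exp (-x) with hθdef
  set d : ℝ := 1 - Real.exp (-h) with hddef
  have hqq : (Real.exp (-x) - 1) / (Real.exp (-h) - 1) = θ / d := by
    rw [hθdef, hddef, ← neg_div_neg_eq, neg_sub, neg_sub]
  rw [hqq]
  have hθ : 0 ≤ θ := le_of_lt (by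
    have := Real.exp_lt_one_iff.2 (neg_lt_zero.2 hx); simp only [hθdef]; linarith)
  have e1 : d ≤ h := by nlinarith [Real.add_one_le_exp (-h)]
  have e2 : h ≤ Real.exp h - 1 := by nlinarith [Real.add_one_le_exp h]
  have e3 : Real.exp h * Real.exp (-h) = 1 := by rw [← Real.exp_add]; simp
  have hd : 0 < d := by simp only [hddef]; linarith
  constructor
  · rw [mul_div_assoc', le_div_iff₀ hd]
    nlinarith [mul_le_mul_of_nonneg_left e1 hθ]
  · rw [mul_div_assoc', div_le_iff₀ hd]
    have : Real.exp h * d = Real.exp h - 1 := by simp only [hddef]; nlinarith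
    nlinarith [mul_le_mul_of_nonneg_left e2 hθ]


lemma bsv_geo_neg {x : ℝ} (hx : x < 0) {n : ℕ} (hn : 0 < n) :
    Real.exp (-x) - 1 ≤ ((-x)/n) * ∑ k ∈ Finset.range n, Real.exp (-((((n:ℝ)-(k:ℝ)))*(x/n)))
    ∧ ((-x)/n) * ∑ k ∈ Finset.range n, Real.exp (-((((n:ℝ)-(k:ℝ)))*(x/n)))
        ≤ (Real.exp (-x) - 1) * Real.exp ((-x)/n) := by
  set h : ℝ := (-x)/n with hhdef
  have hn' : (0:ℝ) < n := by exact_mod_cast hn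
  have hn0 : (n:ℝ) ≠ 0 := ne_of_gt hn'
  have hh0 : 0 < h := by rw [hhdef]; apply div_pos (by linarith) hn'
  have hq : Real.exp (-h) < 1 := Real.exp_lt_one_iff.2 (by linarith)
  have hterm : ∀ k ∈ Finset.range n,
      Real.exp (-((((n:ℝ)-(k:ℝ)))*(x/n))) = Real.exp (-x) * Real.exp (-h) ^ k := by
    intro k _
    rw [← Real.exp_nat_mul, ← Real.exp_add]
    congr 1
    rw [hhdef]; field_simp; ring
  have hsum : ∑ k ∈ Finset.range n, Real.exp (-((((n:ℝ)-(k:ℝ)))*(x/n)))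
      = Real.exp (-x) * ((Real.exp (-h) ^ n - 1) / (Real.exp (-h) - 1)) := by
    rw [Finset.sum_congr rfl hterm, ← Finset.mul_sum, geom_sum_eq (by linarith)]
  have hqn : Real.exp (-h) ^ n = Real.exp x := by
    rw [← Real.exp_nat_mul]; congr 1; rw [hhdef]; field_simp
  rw [hsum, hqn]
  set θ : ℝ := Real.exp (-x) - 1 with hθdef
  set d : ℝ := 1 - Real.exp (-h) with hddef
  have hexx : Real.exp (-x) * Real.exp x = 1 := by rw [← Real.exp_add]; simp
  have hqq : Real.exp (-x) * ((Real.exp x - 1) / (Real.exp (-h) - 1)) = θ / d := by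
    rw [mul_div_assoc']
    rw [show Real.exp (-x) * (Real.exp x - 1) = -θ by rw [hθdef]; nlinarith]
    rw [show Real.exp (-h) - 1 = -d by rw [hddef]; ring, neg_div_neg_eq]
  rw [hqq]
  have hθ : 0 ≤ θ := by
    have : (1:ℝ) < Real.exp (-x) := by
      rw [Real.one_lt_exp_iff]; linarith
    rw [hθdef]; linarith
  have e1 : d ≤ h := by rw [hddef]; nlinarith [Real.add_one_le_exp (-h)]
  have e2 : h ≤ Real.exp h - 1 := by nlinarith [Real.add_one_le_exp h]
  have e3 : Real.exp h * Real.exp (-h) = 1 := by rw [← Real.exp_add]; simp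
  have hd : 0 < d := by rw [hddef]; linarith
  constructor
  · rw [mul_div_assoc', le_div_iff₀ hd]
    nlinarith [mul_le_mul_of_nonneg_left e1 hθ]
  · rw [mul_div_assoc', div_le_iff₀ hd]
    have : Real.exp h * d = Real.exp h - 1 := by rw [hddef]; nlinarith
    nlinarith [mul_le_mul_of_nonneg_left e2 hθ]

section
variable {Fbar : ℝ → ℝ} (hpos : ∀ t, 0 < Fbar t) (hanti : Antitone Fbar)
  (hint : ∀ t : ℝ, IntegrableOn Fbar (Set.Ioi t))

include hanti hint in
lemma bsv_ioc_le {p q : ℝ} (hpq : p ≤ q) :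
    ∫ u in Ioc p q, Fbar u ≤ Fbar p * (q - p) := by
  have h1 : (∫ u in Ioc p q, Fbar u) ≤ ∫ _ in Ioc p q, Fbar p := by
    apply setIntegral_mono_on ((hint p).mono_set Set.Ioc_subset_Ioi_self) (by simp)
      measurableSet_Ioc
    intro u hu; exact hanti hu.1.le
  rwa [setIntegral_const, Real.volume_real_Ioc_of_le hpq,
    smul_eq_mul, mul_comm (q-p)] at h1

include hanti hint in
lemma bsv_ioc_ge {p q : ℝ} (hpq : p ≤ q) :
    Fbar q * (q - p) ≤ ∫ u in Ioc p q, Fbar u := by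
  have h1 : (∫ _ in Ioc p q, Fbar q) ≤ ∫ u in Ioc p q, Fbar u := by
    apply setIntegral_mono_on (by simp) ((hint p).mono_set Set.Ioc_subset_Ioi_self)
      measurableSet_Ioc
    intro u hu; exact hanti hu.2
  rwa [setIntegral_const, Real.volume_real_Ioc_of_le hpq,
    smul_eq_mul, mul_comm (q-p)] at h1

include hint in
lemma bsv_tele (p : ℝ) {h : ℝ} (hh : 0 ≤ h) (n : ℕ) :
    ∫ u in Ioc p (p + n*h), Fbar u
      = ∑ k ∈ Finset.range n, ∫ u in Ioc (p + k*h) (p + (k+1)*h), Fbar u := by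
  induction n with
  | zero => simp
  | succ n ih =>
    have h1 : p ≤ p + n*h := le_add_of_nonneg_right (by positivity)
    have h2 : p + n*h ≤ p + (n+1)*h := by nlinarith
    have hsplit : ∫ u in Ioc p (p + (n+1)*h), Fbar u
        = (∫ u in Ioc p (p + n*h), Fbar u) + ∫ u in Ioc (p + n*h) (p + (n+1)*h), Fbar u := by
      rw [← Set.Ioc_union_Ioc_eq_Ioc h1 h2,
        setIntegral_union (Set.Ioc_disjoint_Ioc_of_le le_rfl) measurableSet_Ioc
          ((hint p).mono_set Set.Ioc_subset_Ioi_self)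
          ((hint (p + n*h)).mono_set Set.Ioc_subset_Ioi_self)]
    rw [Finset.sum_range_succ, ← ih]
    push_cast [hsplit]
    ring_nf

include hpos hanti hint in
lemma bsv_sandwich (n : ℕ) (hn : 0 < n) {x : ℝ} (hx : 0 < x) {c : ℝ} (hc : 0 < c) (t : ℝ) :
    (x/n) * ∑ k ∈ Finset.range n, Fbar (t + (((k:ℝ)+1)*(x/n)) * c) / Fbar t
      ≤ (∫ u in Ioc t (t + x * c), Fbar u) / (c * Fbar t)
    ∧ (∫ u in Ioc t (t + x * c), Fbar u) / (c * Fbar t)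
      ≤ (x/n) * ∑ k ∈ Finset.range n, Fbar (t + ((k:ℝ)*(x/n)) * c) / Fbar t := by
  have hn' : (0:ℝ) < n := by exact_mod_cast hn
  set h : ℝ := x * c / n with hhdef
  have hh0 : 0 < h := by positivity
  have hxc : t + x * c = t + n * h := by rw [hhdef]; field_simp
  have htele := bsv_tele hint t hh0.le n
  have hFt : 0 < Fbar t := hpos t
  have hup : (∫ u in Ioc t (t + x * c), Fbar u)
      ≤ ∑ k ∈ Finset.range n, Fbar (t + k*h) * h := by
    rw [hxc, htele]
    refine Finset.sum_le_sum fun k _ => ?_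
    have := bsv_ioc_le hanti hint (p := t + k*h) (q := t + (k+1)*h) (by nlinarith)
    calc ∫ u in Ioc (t + k*h) (t + (k+1)*h), Fbar u ≤ Fbar (t + k*h) * ((t + (k+1)*h) - (t + k*h)) := this
    _ = Fbar (t + k*h) * h := by ring_nf
  have hlo : ∑ k ∈ Finset.range n, Fbar (t + (k+1)*h) * h
      ≤ ∫ u in Ioc t (t + x * c), Fbar u := by
    rw [hxc, htele]
    refine Finset.sum_le_sum fun k _ => ?_
    have := bsv_ioc_ge hanti hint (p := t + k*h) (q := t + (k+1)*h) (by nlinarith)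
    calc Fbar (t + (k+1)*h) * h = Fbar (t + (k+1)*h) * ((t + (k+1)*h) - (t + k*h)) := by ring_nf
    _ ≤ _ := this
  have hn0 : (n:ℝ) ≠ 0 := ne_of_gt hn'
  have harg1 : ∀ k:ℕ, t + ((k:ℝ)*(x/n))*c = t + (k:ℝ)*h := fun k => by
    rw [hhdef]; field_simp
  have harg2 : ∀ k:ℕ, t + (((k:ℝ)+1)*(x/n))*c = t + ((k:ℝ)+1)*h := fun k => by
    rw [hhdef]; field_simp
  have hcF : 0 < c * Fbar t := by positivity
  constructor
  · rw [le_div_iff₀ hcF]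
    simp only [harg2]
    calc (x/n) * (∑ k ∈ Finset.range n, Fbar (t + ((k:ℝ)+1)*h) / Fbar t) * (c * Fbar t)
        = ∑ k ∈ Finset.range n, Fbar (t + ((k:ℝ)+1)*h) * h := by
          rw [Finset.mul_sum, Finset.sum_mul]
          refine Finset.sum_congr rfl fun k _ => ?_
          rw [hhdef]; field_simp
      _ ≤ _ := hlo
  · rw [div_le_iff₀ hcF]
    simp only [harg1]
    calc (∫ u in Ioc t (t + x * c), Fbar u)
        ≤ ∑ k ∈ Finset.range n, Fbar (t + (k:ℝ)*h) * h := hup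
      _ = (x/n) * (∑ k ∈ Finset.range n, Fbar (t + (k:ℝ)*h) / Fbar t) * (c * Fbar t) := by
          rw [Finset.mul_sum, Finset.sum_mul]
          refine Finset.sum_congr rfl fun k _ => ?_
          rw [hhdef]; field_simp
end

section
variable {Fbar : ℝ → ℝ} (hpos : ∀ t, 0 < Fbar t) (hanti : Antitone Fbar)
  (hint : ∀ t : ℝ, IntegrableOn Fbar (Set.Ioi t))

include hpos hanti hint in
lemma bsv_psi_pos (t : ℝ) : 0 < ∫ u in Ioi t, Fbar u := by
  have hsplit : ∫ u in Ioi t, Fbar u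
      = (∫ u in Ioc t (t+1), Fbar u) + ∫ u in Ioi (t+1), Fbar u := by
    rw [← Set.Ioc_union_Ioi_eq_Ioi (by linarith : t ≤ t+1),
      setIntegral_union (Set.Ioc_disjoint_Ioi le_rfl) measurableSet_Ioi
        ((hint t).mono_set Set.Ioc_subset_Ioi_self)
        ((hint t).mono_set (Set.Ioi_subset_Ioi (by linarith)))]
  have h1 : Fbar (t+1) * ((t+1) - t) ≤ ∫ u in Ioc t (t+1), Fbar u :=
    bsv_ioc_ge hanti hint (by linarith)
  have h2 : 0 ≤ ∫ u in Ioi (t+1), Fbar u :=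
    setIntegral_nonneg measurableSet_Ioi fun u _ => (hpos u).le
  have := hpos (t+1)
  rw [hsplit]; nlinarith

include hpos hanti hint in
lemma bsv_D_pos (a : ℝ → ℝ) (hapos : ∀ t, 0 < a t)
    (hconv : ∀ x : ℝ,
      Tendsto (fun t => Fbar (t + x * a t) / Fbar t) atTop (𝓝 (Real.exp (-x))))
    {x : ℝ} (hx : 0 < x) :
    Tendsto (fun t => (∫ u in Ioc t (t + x * a t), Fbar u) / (a t * Fbar t)) atTop
      (𝓝 (1 - Real.exp (-x))) := by
  set θ : ℝ := 1 - Real.exp (-x) with hθdef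
  have hθ : 0 ≤ θ := le_of_lt (by
    have := Real.exp_lt_one_iff.2 (neg_lt_zero.2 hx); simp only [hθdef]; linarith)
  rw [Metric.tendsto_nhds]
  intro ε hε
  -- choose n
  have htendn : Tendsto (fun n : ℕ => θ * (Real.exp (x/n) - 1)) atTop (𝓝 0) := by
    have h1 : Tendsto (fun n : ℕ => x/(n:ℝ)) atTop (𝓝 0) :=
      tendsto_const_div_atTop_nhds_zero_nat x
    have h2 := (Real.continuous_exp.tendsto 0).comp h1
    rw [Real.exp_zero] at h2
    have h3 := h2.sub_const 1
    rw [sub_self] at h3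
    simpa using h3.const_mul θ
  obtain ⟨n, hsmall, hn⟩ := ((htendn.eventually_lt_const (by linarith : (0:ℝ) < ε/2)).and
    (eventually_gt_atTop 0)).exists
  have hn' : (0:ℝ) < n := by exact_mod_cast hn
  set h : ℝ := x / n with hhdef
  have hh0 : 0 < h := by positivity
  obtain ⟨hU1, hU2⟩ := bsv_geo hx hn
  set U : ℝ := (x/n) * ∑ k ∈ Finset.range n, Real.exp (-((k:ℝ)*(x/n))) with hUdef
  set L : ℝ := (x/n) * ∑ k ∈ Finset.range n, Real.exp (-(((k:ℝ)+1)*(x/n))) with hLdef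
  have hLU : L = Real.exp (-h) * U := by
    rw [hLdef, hUdef, Finset.mul_sum, Finset.mul_sum, Finset.mul_sum]
    refine Finset.sum_congr rfl fun k _ => ?_
    have : Real.exp (-(((k:ℝ)+1)*(x/n))) = Real.exp (-(x/n)) * Real.exp (-((k:ℝ)*(x/n))) := by
      rw [← Real.exp_add]; ring_nf
    rw [this, hhdef]; ring
  have hexph : Real.exp h * Real.exp (-h) = 1 := by rw [← Real.exp_add]; simp
  have hepos := Real.exp_pos h
  have henpos := Real.exp_pos (-h)
  -- U - θ < ε/2 and θ - L < ε/2
  have hUclose : U - θ < ε/2 := by nlinarith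
  have hLclose : θ - L < ε/2 := by
    have hLge : θ * Real.exp (-h) ≤ L := by
      rw [hLU]; nlinarith
    have : θ * (1 - Real.exp (-h)) ≤ θ * (Real.exp h - 1) := by
      apply mul_le_mul_of_nonneg_left _ hθ
      nlinarith [Real.add_one_le_exp h, Real.add_one_le_exp (-h)]
    nlinarith
  -- tendsto of sums
  have hSup : Tendsto (fun t => (x/n) * ∑ k ∈ Finset.range n,
      Fbar (t + ((k:ℝ)*(x/n)) * a t) / Fbar t) atTop (𝓝 U) := by
    rw [hUdef]
    exact (tendsto_finset_sum (Finset.range n) fun k _ => hconv ((k:ℝ)*(x/n))).const_mul (x/n)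
  have hLow : Tendsto (fun t => (x/n) * ∑ k ∈ Finset.range n,
      Fbar (t + (((k:ℝ)+1)*(x/n)) * a t) / Fbar t) atTop (𝓝 L) := by
    rw [hLdef]
    exact (tendsto_finset_sum (Finset.range n) fun k _ => hconv (((k:ℝ)+1)*(x/n))).const_mul (x/n)
  filter_upwards [hSup.eventually (gt_mem_nhds (by linarith : U < U + ε/2)),
    hLow.eventually (lt_mem_nhds (by linarith : L - ε/2 < L))] with t h1 h2
  obtain ⟨hlo, hup⟩ := bsv_sandwich hpos hanti hint n hn hx (hapos t) t
  rw [Real.dist_eq, abs_lt]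
  constructor <;> nlinarith
end

section
variable {Fbar : ℝ → ℝ} (hpos : ∀ t, 0 < Fbar t) (hanti : Antitone Fbar)
  (hint : ∀ t : ℝ, IntegrableOn Fbar (Set.Ioi t))

include hpos hanti hint in
lemma bsv_sandwich_neg (n : ℕ) (hn : 0 < n) {x : ℝ} (hx : x < 0) {c : ℝ} (hc : 0 < c) (t : ℝ) :
    ((-x)/n) * ∑ k ∈ Finset.range n, Fbar (t + (((n:ℝ)-(k:ℝ)-1)*(x/n)) * c) / Fbar t
      ≤ (∫ u in Ioc (t + x * c) t, Fbar u) / (c * Fbar t)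
    ∧ (∫ u in Ioc (t + x * c) t, Fbar u) / (c * Fbar t)
      ≤ ((-x)/n) * ∑ k ∈ Finset.range n, Fbar (t + (((n:ℝ)-(k:ℝ))*(x/n)) * c) / Fbar t := by
  have hn' : (0:ℝ) < n := by exact_mod_cast hn
  have hn0 : (n:ℝ) ≠ 0 := ne_of_gt hn'
  set p : ℝ := t + x * c with hpdef
  set h : ℝ := (-x) * c / n with hhdef
  have hh0 : 0 < h := by rw [hhdef]; apply div_pos (by nlinarith) hn'
  have hpt : t = p + n * h := by rw [hpdef, hhdef]; field_simp; ring
  have htele := bsv_tele hint p hh0.le n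
  rw [← hpt] at htele
  have hFt : 0 < Fbar t := hpos t
  have harg1 : ∀ k:ℕ, t + (((n:ℝ)-(k:ℝ))*(x/n))*c = p + (k:ℝ)*h := fun k => by
    rw [hpdef, hhdef]; field_simp; ring
  have harg2 : ∀ k:ℕ, t + (((n:ℝ)-(k:ℝ)-1)*(x/n))*c = p + ((k:ℝ)+1)*h := fun k => by
    rw [hpdef, hhdef]; field_simp; ring
  have hup : (∫ u in Ioc p t, Fbar u)
      ≤ ∑ k ∈ Finset.range n, Fbar (p + k*h) * h := by
    rw [htele]
    refine Finset.sum_le_sum fun k _ => ?_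
    have := bsv_ioc_le hanti hint (p := p + k*h) (q := p + (k+1)*h) (by nlinarith)
    calc ∫ u in Ioc (p + k*h) (p + (k+1)*h), Fbar u
        ≤ Fbar (p + k*h) * ((p + (k+1)*h) - (p + k*h)) := this
      _ = Fbar (p + k*h) * h := by ring_nf
  have hlo : ∑ k ∈ Finset.range n, Fbar (p + (k+1)*h) * h
      ≤ ∫ u in Ioc p t, Fbar u := by
    rw [htele]
    refine Finset.sum_le_sum fun k _ => ?_
    have := bsv_ioc_ge hanti hint (p := p + k*h) (q := p + (k+1)*h) (by nlinarith)
    calc Fbar (p + (k+1)*h) * h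
        = Fbar (p + (k+1)*h) * ((p + (k+1)*h) - (p + k*h)) := by ring_nf
      _ ≤ _ := this
  have hcF : 0 < c * Fbar t := by positivity
  constructor
  · rw [le_div_iff₀ hcF]
    simp only [harg2]
    calc ((-x)/n) * (∑ k ∈ Finset.range n, Fbar (p + ((k:ℝ)+1)*h) / Fbar t) * (c * Fbar t)
        = ∑ k ∈ Finset.range n, Fbar (p + ((k:ℝ)+1)*h) * h := by
          rw [Finset.mul_sum, Finset.sum_mul]
          refine Finset.sum_congr rfl fun k _ => ?_
          rw [hhdef]; field_simp
      _ ≤ _ := hlo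
  · rw [div_le_iff₀ hcF]
    simp only [harg1]
    calc (∫ u in Ioc p t, Fbar u)
        ≤ ∑ k ∈ Finset.range n, Fbar (p + (k:ℝ)*h) * h := hup
      _ = ((-x)/n) * (∑ k ∈ Finset.range n, Fbar (p + (k:ℝ)*h) / Fbar t) * (c * Fbar t) := by
          rw [Finset.mul_sum, Finset.sum_mul]
          refine Finset.sum_congr rfl fun k _ => ?_
          rw [hhdef]; field_simp
end

section
variable {Fbar : ℝ → ℝ} (hpos : ∀ t, 0 < Fbar t) (hanti : Antitone Fbar)
  (hint : ∀ t : ℝ, IntegrableOn Fbar (Set.Ioi t))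

include hpos hanti hint in
lemma bsv_D_neg (a : ℝ → ℝ) (hapos : ∀ t, 0 < a t)
    (hconv : ∀ x : ℝ,
      Tendsto (fun t => Fbar (t + x * a t) / Fbar t) atTop (𝓝 (Real.exp (-x))))
    {x : ℝ} (hx : x < 0) :
    Tendsto (fun t => (∫ u in Ioc (t + x * a t) t, Fbar u) / (a t * Fbar t)) atTop
      (𝓝 (Real.exp (-x) - 1)) := by
  set θ : ℝ := Real.exp (-x) - 1 with hθdef
  have hθ : 0 ≤ θ := by
    have : (1:ℝ) < Real.exp (-x) := by rw [Real.one_lt_exp_iff]; linarith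
    rw [hθdef]; linarith
  rw [Metric.tendsto_nhds]
  intro ε hε
  have htendn : Tendsto (fun n : ℕ => θ * (Real.exp ((-x)/n) - 1)) atTop (𝓝 0) := by
    have h1 : Tendsto (fun n : ℕ => (-x)/(n:ℝ)) atTop (𝓝 0) :=
      tendsto_const_div_atTop_nhds_zero_nat (-x)
    have h2 := (Real.continuous_exp.tendsto 0).comp h1
    rw [Real.exp_zero] at h2
    have h3 := h2.sub_const 1
    rw [sub_self] at h3
    simpa using h3.const_mul θ
  obtain ⟨n, hsmall, hn⟩ := ((htendn.eventually_lt_const (by linarith : (0:ℝ) < ε/2)).and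
    (eventually_gt_atTop 0)).exists
  have hn' : (0:ℝ) < n := by exact_mod_cast hn
  set h : ℝ := (-x) / n with hhdef
  have hh0 : 0 < h := by rw [hhdef]; apply div_pos (by linarith) hn'
  obtain ⟨hU1, hU2⟩ := bsv_geo_neg hx hn
  set U : ℝ := ((-x)/n) * ∑ k ∈ Finset.range n, Real.exp (-((((n:ℝ)-(k:ℝ)))*(x/n))) with hUdef
  set L : ℝ := ((-x)/n) * ∑ k ∈ Finset.range n, Real.exp (-((((n:ℝ)-(k:ℝ)-1))*(x/n))) with hLdef
  have hLU : L = Real.exp (-h) * U := by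
    rw [hLdef, hUdef, Finset.mul_sum, Finset.mul_sum, Finset.mul_sum]
    refine Finset.sum_congr rfl fun k _ => ?_
    have hn0 : (n:ℝ) ≠ 0 := ne_of_gt hn'
    have : Real.exp (-((((n:ℝ)-(k:ℝ)-1))*(x/n)))
        = Real.exp (-h) * Real.exp (-((((n:ℝ)-(k:ℝ)))*(x/n))) := by
      rw [← Real.exp_add]; congr 1; rw [hhdef]; field_simp; ring
    rw [this, hhdef]; ring
  have hexph : Real.exp h * Real.exp (-h) = 1 := by rw [← Real.exp_add]; simp
  have hepos := Real.exp_pos h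
  have henpos := Real.exp_pos (-h)
  have hUclose : U - θ < ε/2 := by nlinarith
  have hLclose : θ - L < ε/2 := by
    have hLge : θ * Real.exp (-h) ≤ L := by
      rw [hLU]; nlinarith
    have : θ * (1 - Real.exp (-h)) ≤ θ * (Real.exp h - 1) := by
      apply mul_le_mul_of_nonneg_left _ hθ
      nlinarith [Real.add_one_le_exp h, Real.add_one_le_exp (-h)]
    nlinarith
  have hSup : Tendsto (fun t => ((-x)/n) * ∑ k ∈ Finset.range n,
      Fbar (t + ((((n:ℝ)-(k:ℝ)))*(x/n)) * a t) / Fbar t) atTop (𝓝 U) := by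
    rw [hUdef]
    exact (tendsto_finset_sum (Finset.range n)
      fun k _ => hconv ((((n:ℝ)-(k:ℝ)))*(x/n))).const_mul ((-x)/n)
  have hLow : Tendsto (fun t => ((-x)/n) * ∑ k ∈ Finset.range n,
      Fbar (t + ((((n:ℝ)-(k:ℝ)-1))*(x/n)) * a t) / Fbar t) atTop (𝓝 L) := by
    rw [hLdef]
    exact (tendsto_finset_sum (Finset.range n)
      fun k _ => hconv ((((n:ℝ)-(k:ℝ)-1))*(x/n))).const_mul ((-x)/n)
  filter_upwards [hSup.eventually (gt_mem_nhds (by linarith : U < U + ε/2)),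
    hLow.eventually (lt_mem_nhds (by linarith : L - ε/2 < L))] with t h1 h2
  obtain ⟨hlo, hup⟩ := bsv_sandwich_neg hpos hanti hint n hn hx (hapos t) t
  rw [Real.dist_eq, abs_lt]
  constructor <;> nlinarith
end

lemma bsv_split {Fbar : ℝ → ℝ}
    (hint : ∀ t : ℝ, IntegrableOn Fbar (Set.Ioi t)) {p q : ℝ} (hpq : p ≤ q) :
    ∫ u in Ioi p, Fbar u = (∫ u in Ioc p q, Fbar u) + ∫ u in Ioi q, Fbar u := by
  rw [← Set.Ioc_union_Ioi_eq_Ioi hpq,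
    setIntegral_union (Set.Ioc_disjoint_Ioi le_rfl) measurableSet_Ioi
      ((hint p).mono_set Set.Ioc_subset_Ioi_self)
      ((hint p).mono_set (Set.Ioi_subset_Ioi hpq))]

/-- If `F̄ : ℝ → (0,∞)` is a nonincreasing tail tending to `0` at `∞` with
integrable tails, and the Gumbel-domain criterion
`F̄(t + x a(t)) / F̄(t) → e^{-x}` holds with the auxiliary function
`a(t) = (∫_t^∞ F̄(u) du) / F̄(t)`, then `a` is Beurling slowly varying:
`a(t + x a(t)) / a(t) → 1` as `t → ∞`, for every `x ∈ ℝ`. -/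
theorem auxiliary_is_beurling_slowly_varying (Fbar : ℝ → ℝ)
    (hpos : ∀ t, 0 < Fbar t) (hanti : Antitone Fbar)
    (hlim : Tendsto Fbar atTop (𝓝 0))
    (hint : ∀ t : ℝ, IntegrableOn Fbar (Set.Ioi t))
    (a : ℝ → ℝ) (ha : ∀ t, a t = (∫ u in Set.Ioi t, Fbar u) / Fbar t)
    (hconv : ∀ x : ℝ,
      Tendsto (fun t => Fbar (t + x * a t) / Fbar t) atTop (𝓝 (Real.exp (-x)))) :
    ∀ x : ℝ, Tendsto (fun t => a (t + x * a t) / a t) atTop (𝓝 1) := by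
  have hψ := bsv_psi_pos hpos hanti hint
  have hapos : ∀ t, 0 < a t := fun t => by
    rw [ha t]; exact div_pos (hψ t) (hpos t)
  intro x
  rcases lt_trichotomy x 0 with hx | hx | hx
  · -- x < 0
    have key : ∀ t, a (t + x * a t) / a t
        = (1 + (∫ u in Ioc (t + x * a t) t, Fbar u) / (a t * Fbar t))
          * (Fbar (t + x * a t) / Fbar t)⁻¹ := by
      intro t
      set s : ℝ := t + x * a t with hsdef
      have hst : s ≤ t := by nlinarith [hapos t]
      have hsplit := bsv_split hint hst
      have hft := hpos t
      have hfs := hpos s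
      have hQ := hψ t
      have hP := hψ s
      have hIP : 0 < (∫ u in Ioc s t, Fbar u) + ∫ u in Ioi t, Fbar u := by
        rw [← hsplit]; exact hP
      rw [ha s, ha t, hsplit]
      field_simp
      ring
    have hD := bsv_D_neg hpos hanti hint a hapos hconv hx
    have hR := (hconv x).inv₀ (Real.exp_pos (-x)).ne'
    have hmul := ((tendsto_const_nhds (x := (1:ℝ)) (f := atTop)).add hD).mul hR
    have hone : (1 + (Real.exp (-x) - 1)) * (Real.exp (-x))⁻¹ = 1 := by
      field_simp; ring
    rw [hone] at hmul
    exact hmul.congr fun t => (key t).symm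
  · -- x = 0
    have : (fun t => a (t + x * a t) / a t) = fun _ => (1:ℝ) := by
      funext t
      rw [hx]
      simp [div_self (hapos t).ne']
    rw [this]
    exact tendsto_const_nhds
  · -- 0 < x
    have key : ∀ t, a (t + x * a t) / a t
        = (1 - (∫ u in Ioc t (t + x * a t), Fbar u) / (a t * Fbar t))
          * (Fbar (t + x * a t) / Fbar t)⁻¹ := by
      intro t
      set s : ℝ := t + x * a t with hsdef
      have hst : t ≤ s := by nlinarith [hapos t]
      have hsplit := bsv_split hint hst
      have hft := hpos t
      have hfs := hpos s
      have hQ := hψ t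
      have hP := hψ s
      have hIP : 0 < (∫ u in Ioc t s, Fbar u) + ∫ u in Ioi s, Fbar u := by
        rw [← hsplit]; exact hQ
      rw [ha s, ha t, hsplit]
      field_simp [hft.ne', hfs.ne', hIP.ne']
      ring
    have hD := bsv_D_pos hpos hanti hint a hapos hconv hx
    have hR := (hconv x).inv₀ (Real.exp_pos (-x)).ne'
    have hmul := ((tendsto_const_nhds (x := (1:ℝ)) (f := atTop)).sub hD).mul hR
    have hone : (1 - (1 - Real.exp (-x))) * (Real.exp (-x))⁻¹ = 1 := by
      field_simp; ring
    rw [hone] at hmul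
    exact hmul.congr fun t => (key t).symm
end

section
/- Bloom's theorem: If a : ℝ → (0,∞) is continuous and Beurling slowly varying, then a is self-neglecting and a(x)/x → 0 as x → ∞. -/
open Filter Topology

/-- `a : ℝ → (0,∞)` is Beurling slowly varying:
`a(t + x a(t)) / a(t) → 1` as `t → ∞` for each fixed `x`. -/
def BeurlingSlowlyVarying (a : ℝ → ℝ) : Prop :=
  (∀ t, 0 < a t) ∧
    ∀ x : ℝ, Tendsto (fun t => a (t + x * a t) / a t) atTop (𝓝 1)

/-- `a : ℝ → (0,∞)` is self-neglecting: the Beurling convergence is uniform in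
`x` on compact subsets of ℝ. -/
def SelfNeglecting (a : ℝ → ℝ) : Prop :=
  (∀ t, 0 < a t) ∧
    ∀ K : Set ℝ, IsCompact K →
      TendstoUniformlyOn (fun t x => a (t + x * a t) / a t) (fun _ => 1) atTop K


lemma bsv_core (a : ℝ → ℝ) (hcont : Continuous a) (hpos : ∀ t, 0 < a t)
    (hbsv : ∀ x : ℝ, Tendsto (fun t => a (t + x * a t) / a t) atTop (𝓝 1))
    (t y : ℕ → ℝ) (y₀ r : ℝ) (hr : 0 < r) (hr1 : r ≠ 1)
    (ht : Tendsto t atTop atTop) (hy : Tendsto y atTop (𝓝 y₀))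
    (hs : Tendsto (fun n => t n + y n * a (t n)) atTop atTop)
    (hval : ∀ n, a (t n + y n * a (t n)) = r * a (t n)) : False := by
  set g : ℕ → ℝ → ℝ := fun n x => a (t n + x * a (t n)) / a (t n) with hg
  have h1 : ∀ p : ℝ, Tendsto (fun n => g n p) atTop (𝓝 1) := fun p => (hbsv p).comp ht
  have h2 : ∀ p : ℝ, Tendsto (fun n => g n (p + (y n - y₀))) atTop (𝓝 r) := by
    intro p
    set z := (p - y₀) / r with hz
    have key : ∀ n, g n (p + (y n - y₀)) =
        (a ((t n + y n * a (t n)) + z * a (t n + y n * a (t n))) / a (t n + y n * a (t n))) * r := by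
      intro n
      have hne : a (t n) ≠ 0 := (hpos _).ne'
      have hrne : r ≠ 0 := hr.ne'
      have h4 : (t n + y n * a (t n)) + z * a (t n + y n * a (t n))
          = t n + (p + (y n - y₀)) * a (t n) := by
        rw [hval n, hz]
        field_simp
        ring
      rw [hg]
      simp only []
      rw [h4, hval n]
      field_simp
    simp only [key]
    have := ((hbsv z).comp hs).mul_const r
    simpa using this
  have hcg : ∀ n, Continuous (g n) := by
    intro n
    apply Continuous.div_const
    exact hcont.comp (by continuity)
  set c := |r - 1| / 3 with hc
  have hcpos : 0 < c := by
    have : r - 1 ≠ 0 := sub_ne_zero.mpr hr1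
    have := abs_pos.mpr this
    positivity
  set A : ℕ → Set ℝ := fun N => {p | ∀ n, N ≤ n → |g n (p + (y n - y₀)) - r| ≤ c ∧ |g n p - 1| ≤ c} with hA
  have hclosed : ∀ N, IsClosed (A N) := by
    intro N
    have : A N = ⋂ n, ⋂ (_ : N ≤ n),
        ({p : ℝ | |g n (p + (y n - y₀)) - r| ≤ c} ∩ {p : ℝ | |g n p - 1| ≤ c}) := by
      ext p
      simp only [hA, Set.mem_setOf_eq, Set.mem_iInter, Set.mem_inter_iff]
    rw [this]
    refine isClosed_iInter fun n => isClosed_iInter fun _ => IsClosed.inter ?_ ?_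
    · exact isClosed_le (by continuity) continuous_const
    · exact isClosed_le (by continuity) continuous_const
  have hcover : ⋃ N, A N = Set.univ := by
    apply Set.eq_univ_of_forall
    intro p
    have e1 : ∀ᶠ n in atTop, |g n (p + (y n - y₀)) - r| ≤ c := by
      have := (h2 p).eventually (Metric.closedBall_mem_nhds r hcpos)
      simpa [Real.dist_eq] using this
    have e2 : ∀ᶠ n in atTop, |g n p - 1| ≤ c := by
      have := (h1 p).eventually (Metric.closedBall_mem_nhds 1 hcpos)
      simpa [Real.dist_eq] using this
    obtain ⟨N, hN⟩ := (e1.and e2).exists_forall_of_atTop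
    exact Set.mem_iUnion.mpr ⟨N, fun n hn => hN n hn⟩
  obtain ⟨N, x, hx⟩ := nonempty_interior_of_iUnion_of_closed hclosed hcover
  obtain ⟨η, hη, hball⟩ := Metric.isOpen_iff.mp isOpen_interior x hx
  have hballA : Metric.ball x η ⊆ A N := hball.trans interior_subset
  have hδ : ∀ᶠ n in atTop, |y n - y₀| < η := by
    have h0 : Tendsto (fun n => y n - y₀) atTop (𝓝 0) := by
      simpa using hy.sub_const y₀
    have := h0.eventually (Metric.ball_mem_nhds 0 hη)
    simpa [Real.dist_eq] using this
  obtain ⟨n, hnN, hn⟩ : ∃ n, N ≤ n ∧ |y n - y₀| < η := ((eventually_ge_atTop N).and hδ).exists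
  have hxA : x ∈ A N := hballA (Metric.mem_ball_self hη)
  have hpA : x - (y n - y₀) ∈ A N := by
    apply hballA
    simpa [Real.dist_eq, abs_sub_comm] using hn
  have e1 := (hpA n hnN).1
  have e2 := (hxA n hnN).2
  rw [sub_add_cancel] at e1
  have : |r - 1| ≤ 2 * c := by
    calc |r - 1| = |(r - g n x) + (g n x - 1)| := by ring_nf
      _ ≤ |r - g n x| + |g n x - 1| := abs_add_le _ _
      _ ≤ c + c := by rw [abs_sub_comm]; exact add_le_add e1 e2
      _ = 2 * c := by ring
  rw [hc] at this
  have habs : 0 < |r - 1| := abs_pos.mpr (sub_ne_zero.mpr hr1)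
  linarith


lemma bsv_unif (a : ℝ → ℝ) (hcont : Continuous a) (hpos : ∀ t, 0 < a t)
    (hbsv : ∀ x : ℝ, Tendsto (fun t => a (t + x * a t) / a t) atTop (𝓝 1))
    (K : Set ℝ) (M : ℝ) (hKM : K ⊆ Set.Icc (-M) M)
    (hgrow : ∀ t y : ℕ → ℝ, Tendsto t atTop atTop →
      (∀ n, ∃ x ∈ K, y n ∈ Set.uIcc 0 x) →
      Tendsto (fun n => t n + y n * a (t n)) atTop atTop) :
    TendstoUniformlyOn (fun t x => a (t + x * a t) / a t) (fun _ => 1) atTop K := by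
  rw [Metric.tendstoUniformlyOn_iff]
  by_contra hcon
  push_neg at hcon
  obtain ⟨ε, hε, hfreq⟩ := hcon
  have hfreq' : ∀ N : ℕ, ∃ t ≥ (N : ℝ), ∃ x ∈ K, ε ≤ dist (1 : ℝ) (a (t + x * a t) / a t) := by
    intro N
    obtain ⟨t, htN, ht⟩ := (frequently_atTop.mp hfreq) N
    obtain ⟨x, hxK, hx⟩ := ht
    exact ⟨t, htN, x, hxK, hx⟩
  choose t htN x hxK hbad using hfreq'
  have ht : Tendsto t atTop atTop :=
    tendsto_atTop_mono htN tendsto_natCast_atTop_atTop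
  -- IVT: find y n between 0 and x n with exact ratio 1+ε or 1-ε
  set g : ℕ → ℝ → ℝ := fun n u => a (t n + u * a (t n)) / a (t n) with hgdef
  have hg0 : ∀ n, g n 0 = 1 := by
    intro n
    simp only [hgdef, zero_mul, add_zero]
    exact div_self (hpos _).ne'
  have habs : ∀ n, ε ≤ |g n (x n) - 1| := by
    intro n
    have := hbad n
    rwa [Real.dist_eq, abs_sub_comm] at this
  have hcg : ∀ n, Continuous (g n) := fun n =>
    Continuous.div_const (hcont.comp (by continuity)) _
  have hivt : ∀ n, ∃ v : ℝ, (v = 1 + ε ∨ v = 1 - ε) ∧ ∃ u ∈ Set.uIcc 0 (x n), g n u = v := by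
    intro n
    rcases le_or_gt (1 + ε) (g n (x n)) with hcase | hcase
    · refine ⟨1 + ε, Or.inl rfl, ?_⟩
      have : (1 + ε) ∈ Set.uIcc (g n 0) (g n (x n)) := by
        rw [hg0 n]
        exact Set.mem_uIcc.mpr (Or.inl ⟨by linarith, hcase⟩)
      obtain ⟨u, hu, hgu⟩ := intermediate_value_uIcc (Continuous.continuousOn (hcg n)) this
      exact ⟨u, hu, hgu⟩
    · refine ⟨1 - ε, Or.inr rfl, ?_⟩
      have hle : g n (x n) ≤ 1 - ε := by
        rcases abs_sub_le_iff.mp (le_of_eq rfl : |g n (x n) - 1| ≤ |g n (x n) - 1|) with _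
        rcases le_or_gt (g n (x n)) 1 with h1 | h1
        · have := habs n
          rw [abs_sub_comm, abs_of_nonneg (by linarith)] at this
          linarith
        · have := habs n
          rw [abs_of_pos (by linarith)] at this
          linarith
      have : (1 - ε) ∈ Set.uIcc (g n 0) (g n (x n)) := by
        rw [hg0 n]
        exact Set.mem_uIcc.mpr (Or.inr ⟨hle, by linarith⟩)
      obtain ⟨u, hu, hgu⟩ := intermediate_value_uIcc (Continuous.continuousOn (hcg n)) this
      exact ⟨u, hu, hgu⟩
  choose v hv u hu hgu using hivt
  -- constant sign subsequence
  have hfreq2 : (∃ᶠ n in atTop, v n = 1 + ε) ∨ (∃ᶠ n in atTop, v n = 1 - ε) := by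
    rw [← frequently_or_distrib]
    exact Filter.Frequently.of_forall hv
  obtain ⟨r, hrpos, hrne, φ₁, hφ₁, hvφ⟩ :
      ∃ r : ℝ, 0 < r ∧ r ≠ 1 ∧ ∃ φ₁ : ℕ → ℕ, StrictMono φ₁ ∧ ∀ n, v (φ₁ n) = r := by
    rcases hfreq2 with h | h
    · obtain ⟨φ₁, hφ₁, hp⟩ := Filter.extraction_of_frequently_atTop h
      exact ⟨1 + ε, by linarith, by linarith, φ₁, hφ₁, hp⟩
    · obtain ⟨φ₁, hφ₁, hp⟩ := Filter.extraction_of_frequently_atTop h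
      have h1e : 0 < 1 - ε := by
        have := hpos (t (φ₁ 0) + u (φ₁ 0) * a (t (φ₁ 0)))
        have hx := hgu (φ₁ 0)
        rw [hp 0] at hx
        rw [hgdef] at hx
        simp only at hx
        nlinarith [hpos (t (φ₁ 0)), div_pos (hpos (t (φ₁ 0) + u (φ₁ 0) * a (t (φ₁ 0)))) (hpos (t (φ₁ 0)))]
      exact ⟨1 - ε, h1e, by linarith, φ₁, hφ₁, hp⟩
  -- convergent subsequence of u ∘ φ₁ in Icc (-M') M'
  have hM0 : 0 ≤ M := by
    obtain ⟨xx, hxx⟩ : K.Nonempty := ⟨x 0, hxK 0⟩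
    have := hKM hxx
    simp only [Set.mem_Icc] at this
    linarith
  have huM : ∀ n, u n ∈ Set.Icc (-M) M := by
    intro n
    have hx := hKM (hxK n)
    simp only [Set.mem_Icc] at hx ⊢
    have := hu n
    rw [Set.uIcc_eq_union] at this
    rcases (Set.mem_union _ _ _).mp this with h | h <;>
      simp only [Set.mem_Icc] at h <;> constructor <;> linarith [h.1, h.2, hx.1, hx.2]
  obtain ⟨y₀, _, φ₂, hφ₂, hyconv⟩ :=
    (isCompact_Icc (a := -M) (b := M)).tendsto_subseq (fun n => huM (φ₁ n))
  set ψ := φ₁ ∘ φ₂ with hψ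
  have hψmono : StrictMono ψ := hφ₁.comp hφ₂
  set T : ℕ → ℝ := fun n => t (ψ n) with hT
  set Y : ℕ → ℝ := fun n => u (ψ n) with hY
  have hTtop : Tendsto T atTop atTop := ht.comp hψmono.tendsto_atTop
  have hYconv : Tendsto Y atTop (𝓝 y₀) := hyconv
  have hYval : ∀ n, a (T n + Y n * a (T n)) = r * a (T n) := by
    intro n
    have h1 := hgu (ψ n)
    have h2 := hvφ (φ₂ n)
    rw [hψ] at *
    simp only [Function.comp_apply] at h1 ⊢
    rw [h2] at h1
    rw [hgdef] at h1
    simp only at h1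
    have := hpos (t (φ₁ (φ₂ n)))
    field_simp at h1
    rw [hT, hY]
    simp only [Function.comp_apply]
    linarith [h1]
  have hYgrow : Tendsto (fun n => T n + Y n * a (T n)) atTop atTop := by
    apply hgrow T Y hTtop
    intro n
    exact ⟨x (ψ n), hxK (ψ n), hu (ψ n)⟩
  exact bsv_core a hcont hpos hbsv T Y y₀ r hrpos hrne hTtop hYconv hYgrow hYval


lemma bsv_unif01 (a : ℝ → ℝ) (hcont : Continuous a) (hpos : ∀ t, 0 < a t)
    (hbsv : ∀ x : ℝ, Tendsto (fun t => a (t + x * a t) / a t) atTop (𝓝 1)) :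
    TendstoUniformlyOn (fun t x => a (t + x * a t) / a t) (fun _ => 1) atTop
      (Set.Icc (0:ℝ) 1) := by
  apply bsv_unif a hcont hpos hbsv _ 1
  · intro z hz
    simp only [Set.mem_Icc] at hz ⊢
    exact ⟨by linarith [hz.1], hz.2⟩
  · intro t y ht hy
    apply tendsto_atTop_mono _ ht
    intro n
    obtain ⟨x, hx, hyx⟩ := hy n
    simp only [Set.mem_Icc] at hx
    rw [Set.uIcc_of_le hx.1] at hyx
    have hy0 : 0 ≤ y n := hyx.1
    nlinarith [hpos (t n)]

lemma bsv_o (a : ℝ → ℝ) (hcont : Continuous a) (hpos : ∀ t, 0 < a t)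
    (hbsv : ∀ x : ℝ, Tendsto (fun t => a (t + x * a t) / a t) atTop (𝓝 1)) :
    Tendsto (fun x => a x / x) atTop (𝓝 0) := by
  rw [Metric.tendsto_atTop]
  intro ε hε
  set ε' : ℝ := min (ε / 6) (1 / 2) with hε'
  have hε'pos : 0 < ε' := lt_min (by linarith) (by norm_num)
  have hε'le : ε' ≤ 1 / 2 := min_le_right _ _
  have hε'ε : ε' ≤ ε / 6 := min_le_left _ _
  obtain ⟨T, hT⟩ : ∃ T : ℝ, ∀ s ≥ T, ∀ u ∈ Set.Icc (0:ℝ) 1,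
      |a (s + u * a s) / a s - 1| ≤ ε' := by
    have := (Metric.tendstoUniformlyOn_iff.mp (bsv_unif01 a hcont hpos hbsv)) ε' hε'pos
    rw [eventually_atTop] at this
    obtain ⟨T, hT⟩ := this
    exact ⟨T, fun s hs u hu => by
      have := hT s hs u hu
      rw [Real.dist_eq, abs_sub_comm] at this
      exact this.le⟩
  set T₀ : ℝ := max T 1 with hT₀
  obtain ⟨t, ht0, htrec⟩ : ∃ t : ℕ → ℝ, t 0 = T₀ ∧ ∀ k, t (k+1) = t k + a (t k) :=
    ⟨fun k => Nat.rec T₀ (fun _ s => s + a s) k, rfl, fun k => rfl⟩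
  have htmono : StrictMono t := by
    apply strictMono_nat_of_lt_succ
    intro k
    rw [htrec k]
    linarith [hpos (t k)]
  have htge : ∀ k, T₀ ≤ t k := by
    intro k
    induction k with
    | zero => rw [ht0]
    | succ k ih => rw [htrec k]; linarith [hpos (t k)]
  have htgeT : ∀ k, T ≤ t k := fun k => le_trans (le_max_left _ _) (htge k)
  have htge1 : ∀ k, (1:ℝ) ≤ t k := fun k => le_trans (le_max_right _ _) (htge k)
  have htpos : ∀ k, (0:ℝ) < t k := fun k => lt_of_lt_of_le one_pos (htge1 k)
  have htop : Tendsto t atTop atTop := by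
    rcases tendsto_of_monotone htmono.monotone with h | ⟨l, hl⟩
    · exact h
    · exfalso
      have h1 : Tendsto (fun k => t (k + 1)) atTop (𝓝 l) :=
        hl.comp (tendsto_add_atTop_nat 1)
      have h2 : Tendsto (fun k => a (t k)) atTop (𝓝 (a l)) :=
        (hcont.tendsto l).comp hl
      have h3 : Tendsto (fun k => t (k+1) - t k) atTop (𝓝 (l - l)) := h1.sub hl
      have h4 : Tendsto (fun k => a (t k)) atTop (𝓝 0) := by
        simp only [htrec, add_sub_cancel_left] at h3
        simpa using h3
      have := tendsto_nhds_unique h2 h4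
      exact (hpos l).ne' this
  have hstep : ∀ k, ∀ u ∈ Set.Icc (0:ℝ) 1, a (t k + u * a (t k)) ≤ (1 + ε') * a (t k) := by
    intro k u hu
    have h := hT (t k) (htgeT k) u hu
    have h2 := (abs_sub_le_iff.mp h).1
    have hp := hpos (t k)
    have h5 : a (t k + u * a (t k)) / a (t k) ≤ 1 + ε' := by linarith
    rwa [div_le_iff₀ hp] at h5
  have hsucc : ∀ k, a (t (k+1)) ≤ (1 + ε') * a (t k) := by
    intro k
    have := hstep k 1 (by norm_num)
    rw [one_mul] at this
    rw [htrec k]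
    exact this
  -- there is k with a (t k) ≤ 2 ε' t k
  have hkey2 : ∃ k, a (t k) ≤ 2 * ε' * t k := by
    by_contra hcon
    push_neg at hcon
    have hgrow2 : ∀ k, a (t k) ≤ (1 + ε') ^ k * a (t 0) := by
      intro k
      induction k with
      | zero => simp
      | succ k ih =>
        calc a (t (k+1)) ≤ (1 + ε') * a (t k) := hsucc k
          _ ≤ (1 + ε') * ((1 + ε') ^ k * a (t 0)) := by nlinarith
          _ = (1 + ε') ^ (k+1) * a (t 0) := by ring
    have htlow : ∀ k, (1 + 2 * ε') ^ k * t 0 ≤ t k := by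
      intro k
      induction k with
      | zero => simp
      | succ k ih =>
        have h1 := hcon k
        have h2 : (0:ℝ) < (1 + 2*ε') ^ k := by positivity
        calc (1 + 2*ε') ^ (k+1) * t 0 = (1 + 2*ε') * ((1 + 2*ε') ^ k * t 0) := by ring
          _ ≤ (1 + 2*ε') * t k := by nlinarith [htpos k]
          _ = t k + 2 * ε' * t k := by ring
          _ ≤ t k + a (t k) := by linarith
          _ = t (k+1) := (htrec k).symm
    set θ : ℝ := (1 + ε') / (1 + 2 * ε') with hθ
    have hθ1 : θ < 1 := by
      rw [hθ, div_lt_one (by linarith)]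
      linarith
    have hθ0 : 0 ≤ θ := by positivity
    have hbound : ∀ k, 2 * ε' * t 0 ≤ θ ^ k * a (t 0) := by
      intro k
      have h1 : 2 * ε' * ((1 + 2*ε') ^ k * t 0) ≤ 2 * ε' * t k := by
        have := htlow k
        nlinarith
      have h2 : 2 * ε' * t k < a (t k) := hcon k
      have h3 : a (t k) ≤ (1 + ε') ^ k * a (t 0) := hgrow2 k
      have h4 : 2 * ε' * ((1 + 2*ε') ^ k * t 0) ≤ (1 + ε') ^ k * a (t 0) := by linarith
      have h5 : (0:ℝ) < (1 + 2*ε') ^ k := by positivity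
      rw [hθ, div_pow, div_mul_eq_mul_div, le_div_iff₀ h5]
      have h6 : 2 * ε' * t 0 * (1 + 2*ε') ^ k = 2 * ε' * ((1 + 2*ε') ^ k * t 0) := by ring
      linarith
    have hlim : Tendsto (fun k => θ ^ k * a (t 0)) atTop (𝓝 0) := by
      have := (tendsto_pow_atTop_nhds_zero_of_lt_one hθ0 hθ1).mul_const (a (t 0))
      simpa using this
    have hlt : ∀ᶠ k in atTop, θ ^ k * a (t 0) < 2 * ε' * t 0 := by
      apply hlim.eventually_lt_const
      have h0 := htpos 0
      positivity
    obtain ⟨k, hk⟩ := hlt.exists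
    exact absurd (hbound k) (not_le.mpr hk)
  obtain ⟨k₀, hk₀⟩ := hkey2
  have hinv : ∀ k, k₀ ≤ k → a (t k) ≤ 2 * ε' * t k := by
    intro k hk
    induction k with
    | zero => exact Nat.le_zero.mp hk ▸ hk₀
    | succ k ih =>
      rcases Nat.lt_or_ge k₀ (k+1) with h | h
      · have hρk := ih (Nat.lt_succ_iff.mp h)
        have h1 := hsucc k
        have h2 := htrec k
        have h3 := hpos (t k)
        have h4 : (1 + ε') * a (t k) ≤ 2 * ε' * t (k+1) := by
          rw [h2]
          nlinarith
        linarith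
      · have : k₀ = k + 1 := le_antisymm hk h
        rw [← this]
        exact hk₀
  refine ⟨t k₀, fun x hx => ?_⟩
  have hex : ∃ j, x < t (k₀ + j) := by
    have := htop.eventually (eventually_gt_atTop x)
    rw [eventually_atTop] at this
    obtain ⟨N, hN⟩ := this
    exact ⟨N, hN (k₀ + N) (Nat.le_add_left N k₀)⟩
  set j := Nat.find hex with hj
  have hjspec : x < t (k₀ + j) := Nat.find_spec hex
  have hj0 : j ≠ 0 := by
    intro h
    rw [h] at hjspec
    simp at hjspec
    linarith
  obtain ⟨i, hi⟩ : ∃ i, j = i + 1 := ⟨j - 1, (Nat.succ_pred_eq_of_pos (Nat.pos_of_ne_zero hj0)).symm⟩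
  set k := k₀ + i with hk
  have hklow : t k ≤ x := by
    have := Nat.find_min hex (by omega : i < j)
    push_neg at this
    exact this
  have hkhigh : x < t (k + 1) := by
    rw [hk]
    have heq : k₀ + i + 1 = k₀ + j := by omega
    rw [heq]
    exact hjspec
  have hkge : k₀ ≤ k := Nat.le_add_right _ _
  set u : ℝ := (x - t k) / a (t k) with hu
  have hu0 : 0 ≤ u := div_nonneg (by linarith) (hpos _).le
  have hu1 : u ≤ 1 := by
    rw [hu, div_le_one (hpos _)]
    have := htrec k
    linarith
  have hxeq : x = t k + u * a (t k) := by
    rw [hu, div_mul_cancel₀ _ (hpos (t k)).ne']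
    ring
  have hax : a x ≤ (1 + ε') * a (t k) := by
    rw [hxeq]
    exact hstep k u ⟨hu0, hu1⟩
  have hatk : a (t k) ≤ 2 * ε' * t k := hinv k hkge
  have hxpos : (0:ℝ) < x := lt_of_lt_of_le (htpos k₀) hx
  have htkx : t k ≤ x := hklow
  have hfin : a x / x ≤ 3 * ε' := by
    rw [div_le_iff₀ hxpos]
    have h1 : a x ≤ (1 + ε') * (2 * ε' * t k) := by nlinarith [hpos (t k)]
    have h2 : (1 + ε') * (2 * ε' * t k) ≤ (1 + ε') * (2 * ε' * x) := by
      nlinarith [mul_nonneg (mul_nonneg (by linarith : (0:ℝ) ≤ 1 + ε')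
        (by linarith : (0:ℝ) ≤ 2 * ε')) (by linarith : (0:ℝ) ≤ x - t k)]
    have h3 : (1 + ε') * (2 * ε' * x) ≤ 3 * ε' * x := by
      nlinarith [mul_nonneg (mul_nonneg (by linarith : (0:ℝ) ≤ 1/2 - ε') hε'pos.le) hxpos.le]
    linarith
  rw [Real.dist_eq, sub_zero, abs_of_pos (div_pos (hpos x) hxpos)]
  calc a x / x ≤ 3 * ε' := hfin
    _ ≤ 3 * (ε / 6) := by linarith
    _ < ε := by linarith


lemma bsv_unif_all (a : ℝ → ℝ) (hcont : Continuous a) (hpos : ∀ t, 0 < a t)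
    (hbsv : ∀ x : ℝ, Tendsto (fun t => a (t + x * a t) / a t) atTop (𝓝 1))
    (K : Set ℝ) (hK : IsCompact K) :
    TendstoUniformlyOn (fun t x => a (t + x * a t) / a t) (fun _ => 1) atTop K := by
  obtain ⟨M, hM⟩ := hK.isBounded.subset_closedBall 0
  set M' : ℝ := max M 0 with hM'
  have hM'0 : (0:ℝ) ≤ M' := le_max_right _ _
  have hKM : K ⊆ Set.Icc (-M') M' := by
    intro z hz
    have := hM hz
    rw [Metric.mem_closedBall, Real.dist_eq, sub_zero] at this
    have h1 := abs_le.mp this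
    simp only [Set.mem_Icc]
    constructor
    · linarith [h1.1, le_max_left M 0]
    · linarith [h1.2, le_max_left M 0]
  apply bsv_unif a hcont hpos hbsv K M' hKM
  intro t y ht hy
  have hoy : Tendsto (fun n => a (t n) / t n) atTop (𝓝 0) :=
    (bsv_o a hcont hpos hbsv).comp ht
  have hymin : ∀ n, -M' ≤ y n := by
    intro n
    obtain ⟨x, hxK, hyx⟩ := hy n
    have hx := hKM hxK
    simp only [Set.mem_Icc] at hx
    rcases Set.mem_uIcc.mp hyx with h | h
    · linarith [h.1]
    · linarith [h.1, hx.1]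
  have hev : ∀ᶠ n in atTop, t n / 2 ≤ t n + y n * a (t n) := by
    have h1 : ∀ᶠ n in atTop, a (t n) / t n < 1 / (2 * (M' + 1)) :=
      hoy.eventually_lt_const (by positivity)
    have h2 : ∀ᶠ n in atTop, (1:ℝ) ≤ t n := ht.eventually (eventually_ge_atTop 1)
    filter_upwards [h1, h2] with n ha hb
    have htn : (0:ℝ) < t n := by linarith
    rw [div_lt_div_iff₀ htn (by positivity)] at ha
    have hA : 2 * M' * a (t n) ≤ t n := by nlinarith [hpos (t n)]
    have hF1 : -M' * a (t n) ≤ y n * a (t n) :=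
      mul_le_mul_of_nonneg_right (hymin n) (hpos (t n)).le
    linarith
  exact tendsto_atTop_mono' _ hev (ht.atTop_div_const two_pos)

/-- **Bloom's theorem.**  A continuous Beurling slowly varying function is
self-neglecting, and satisfies `a(x)/x → 0` as `x → ∞`. -/
theorem bloom (a : ℝ → ℝ) (hcont : Continuous a)
    (hBSV : BeurlingSlowlyVarying a) :
    SelfNeglecting a ∧ Tendsto (fun x => a x / x) atTop (𝓝 0) := by
  obtain ⟨hpos, hb⟩ := hBSV
  refine ⟨⟨hpos, fun K hK => bsv_unif_all a hcont hpos hb K hK⟩, bsv_o a hcont hpos hb⟩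
end

section
/- Von Mises condition for the Fréchet domain: Let F be a distribution function with upper end-point x₊ = ∞, differentiable with derivative f (its density) and with F̄(x) > 0 for all x. If the scaled hazard rate satisfies x f(x)/F̄(x) → α as x → ∞ for some α > 0, then F ∈ D(Φ_α). -/
open Filter Topology

/-- A (cumulative) distribution function on ℝ. -/
def IsDistFun (F : ℝ → ℝ) : Prop :=
  Monotone F ∧ (∀ x, ContinuousWithinAt F (Set.Ici x) x) ∧
    Tendsto F atBot (𝓝 0) ∧ Tendsto F atTop (𝓝 1)

/-- `F` lies in the domain of attraction of `G`. -/
def MemDomAttr (F G : ℝ → ℝ) : Prop :=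
  ∃ a b : ℕ → ℝ, (∀ n, 0 < a n) ∧
    ∀ x : ℝ, ContinuousAt G x →
      Tendsto (fun n => F (a n * x + b n) ^ n) atTop (𝓝 (G x))

/-- The Fréchet law `Φ_α`. -/
noncomputable def frechet (α : ℝ) (x : ℝ) : ℝ :=
  if 0 < x then Real.exp (-(x ^ (-α))) else 0

/-- If `K` is everywhere differentiable with derivative `k` tending to `α` at `+∞`,
then `K (s + c) - K s → α * c` as `s → ∞`. -/
lemma mvt_shift_aux {K k : ℝ → ℝ} (hK : ∀ s, HasDerivAt K (k s) s) {α : ℝ}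
    (hk : Tendsto k atTop (𝓝 α)) (c : ℝ) :
    Tendsto (fun s => K (s + c) - K s) atTop (𝓝 (α * c)) := by
  rcases lt_trichotomy c 0 with hc | rfl | hc
  · have hmvt : ∀ s : ℝ, ∃ ξ ∈ Set.Ioo (s + c) s, k ξ = (K s - K (s + c)) / (s - (s + c)) :=
      fun s => exists_hasDerivAt_eq_slope K k (by linarith)
        (fun x _ => (hK x).continuousAt.continuousWithinAt) (fun x _ => hK x)
    choose ξ hmem hval using hmvt
    have hξ : Tendsto ξ atTop atTop :=
      tendsto_atTop_mono (fun s => (hmem s).1.le)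
        (tendsto_atTop_add_const_right _ c tendsto_id)
    have h := (hk.comp hξ).mul_const c
    refine h.congr fun s => ?_
    have hv := hval s
    have hne : s - (s + c) ≠ 0 := by intro h'; apply absurd h'; intro h''; nlinarith
    simp only [Function.comp_apply]
    rw [hv, show s - (s + c) = -c by ring, div_neg, neg_mul,
      div_mul_cancel₀ _ hc.ne]
    ring
  · simpa using (tendsto_const_nhds : Tendsto (fun _ : ℝ => (0:ℝ)) atTop (𝓝 0))
  · have hmvt : ∀ s : ℝ, ∃ ξ ∈ Set.Ioo s (s + c), k ξ = (K (s + c) - K s) / (s + c - s) :=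
      fun s => exists_hasDerivAt_eq_slope K k (by linarith)
        (fun x _ => (hK x).continuousAt.continuousWithinAt) (fun x _ => hK x)
    choose ξ hmem hval using hmvt
    have hξ : Tendsto ξ atTop atTop :=
      tendsto_atTop_mono (fun s => (hmem s).1.le) tendsto_id
    have h := (hk.comp hξ).mul_const c
    refine h.congr fun s => ?_
    have hv := hval s
    have hne : s + c - s ≠ 0 := by intro h'; nlinarith
    simp only [Function.comp_apply]
    rw [hv]
    field_simp
    ring

/-- **Von Mises condition for the Fréchet domain.**  Let `F` be a distribution
function with upper end-point `x₊ = ∞` (i.e. `F < 1` everywhere, so the tail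
`F̄ > 0` everywhere), differentiable with density `f`.  If the scaled hazard
rate satisfies `x f(x) / F̄(x) → α > 0` as `x → ∞`, then `F ∈ D(Φ_α)`. -/
theorem vonMises_frechet (F f : ℝ → ℝ) (hF : IsDistFun F)
    (hxp : ∀ x, F x < 1)
    (hderiv : ∀ x, HasDerivAt F (f x) x)
    (α : ℝ) (hα : 0 < α)
    (hlim : Tendsto (fun x => x * f x / (1 - F x)) atTop (𝓝 α)) :
    MemDomAttr F (frechet α) := by
  classical
  have hFc : ∀ x, ContinuousAt F x := fun x => (hderiv x).continuousAt
  have h0 : ∀ x, 0 ≤ F x := fun x =>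
    le_of_tendsto hF.2.2.1 ((eventually_le_atBot x).mono fun y hy => hF.1 hy)
  have htail : ∀ x, 0 < 1 - F x := fun x => sub_pos.2 (hxp x)
  set H : ℝ → ℝ := fun t => -Real.log (1 - F t) with hHdef
  have hexp : ∀ t, Real.exp (-(H t)) = 1 - F t := fun t => by
    simp only [hHdef, neg_neg]
    exact Real.exp_log (htail t)
  have hH : ∀ t, HasDerivAt H (f t / (1 - F t)) t := fun t => by
    have h1 : HasDerivAt (fun t => 1 - F t) (-f t) t := (hderiv t).const_sub 1
    have h2 := (h1.log (htail t).ne').neg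
    refine h2.congr_deriv ?_
    ring
  set K : ℝ → ℝ := fun s => H (Real.exp s) with hKdef
  set k : ℝ → ℝ := fun s => Real.exp s * f (Real.exp s) / (1 - F (Real.exp s)) with hkdef
  have hK : ∀ s, HasDerivAt K (k s) s := fun s => by
    have h1 := (hH (Real.exp s)).comp s (Real.hasDerivAt_exp s)
    refine h1.congr_deriv ?_
    simp only [hkdef]
    ring
  have hk : Tendsto k atTop (𝓝 α) := hlim.comp Real.tendsto_exp_atTop
  have hHrat : ∀ x : ℝ, 0 < x →
      Tendsto (fun t => H (t * x) - H t) atTop (𝓝 (α * Real.log x)) := by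
    intro x hx
    have h1 := (mvt_shift_aux hK hk (Real.log x)).comp Real.tendsto_log_atTop
    refine h1.congr' ?_
    filter_upwards [eventually_gt_atTop (0:ℝ)] with t ht
    simp only [Function.comp, hKdef]
    rw [Real.exp_add, Real.exp_log ht, Real.exp_log hx]
  -- construct the scaling sequence
  have hex : ∀ n : ℕ, 2 ≤ n → ∃ y : ℝ, F y = 1 - 1 / (n : ℝ) := by
    intro n hn
    have hn' : (2:ℝ) ≤ (n:ℝ) := by exact_mod_cast hn
    have hy0 : 0 < 1 - 1/(n:ℝ) := by
      have h1 : 1/(n:ℝ) ≤ 1/2 := by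
        apply one_div_le_one_div_of_le <;> linarith
      linarith
    have hy1 : 1 - 1/(n:ℝ) < 1 := by
      have : 0 < 1/(n:ℝ) := by positivity
      linarith
    obtain ⟨x1, hx1⟩ := (hF.2.2.1.eventually_lt_const hy0).exists
    obtain ⟨x2, hx2⟩ := (hF.2.2.2.eventually_const_lt hy1).exists
    have hx12 : x1 ≤ x2 := by
      by_contra h
      push_neg at h
      exact absurd (hF.1 h.le) (by linarith)
    obtain ⟨y, _, hy⟩ := intermediate_value_Icc hx12
      (fun z _ => (hFc z).continuousWithinAt) ⟨hx1.le, hx2.le⟩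
    exact ⟨y, hy⟩
  set c : ℕ → ℝ := fun n => if h : 2 ≤ n then (hex n h).choose else 1 with hcdef
  have hc : ∀ n, 2 ≤ n → F (c n) = 1 - 1/(n:ℝ) := fun n hn => by
    simp only [hcdef, dif_pos hn]
    exact (hex n hn).choose_spec
  have hc_top : Tendsto c atTop atTop := by
    rw [tendsto_atTop]
    intro M
    have h1 : ∀ᶠ n : ℕ in atTop, 1/(n:ℝ) < 1 - F M :=
      tendsto_one_div_atTop_nhds_zero_nat.eventually_lt_const (htail M)
    filter_upwards [h1, eventually_ge_atTop 2] with n hn h2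
    by_contra h
    push_neg at h
    have hmono := hF.1 h.le
    rw [hc n h2] at hmono
    linarith
  set a : ℕ → ℝ := fun n => max (c n) 1 with hadef
  have ha_pos : ∀ n, 0 < a n := fun n => lt_of_lt_of_le one_pos (le_max_right _ _)
  have ha_top : Tendsto a atTop atTop :=
    tendsto_atTop_mono (fun n => le_max_left _ _) hc_top
  have haF : ∀ᶠ n : ℕ in atTop, F (a n) = 1 - 1/(n:ℝ) := by
    filter_upwards [hc_top.eventually_ge_atTop 1, eventually_ge_atTop 2] with n h1 h2
    simp only [hadef, max_eq_left h1]
    exact hc n h2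
  -- key tail limit
  have hkey : ∀ x : ℝ, 0 < x →
      Tendsto (fun n : ℕ => (n : ℝ) * (1 - F (a n * x))) atTop (𝓝 (x ^ (-α))) := by
    intro x hx
    have hΔ : Tendsto (fun n : ℕ => H (a n * x) - H (a n)) atTop (𝓝 (α * Real.log x)) :=
      (hHrat x hx).comp ha_top
    have h1 : Tendsto (fun n : ℕ => Real.exp (-(H (a n * x) - H (a n)))) atTop
        (𝓝 (Real.exp (-(α * Real.log x)))) := (Real.continuous_exp.tendsto _).comp hΔ.neg
    have hxα : Real.exp (-(α * Real.log x)) = x ^ (-α) := by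
      rw [Real.rpow_def_of_pos hx]
      ring_nf
    rw [← hxα]
    refine h1.congr' ?_
    filter_upwards [haF, eventually_ge_atTop 2] with n hFn hn2
    have hn' : (2:ℝ) ≤ (n:ℝ) := by exact_mod_cast hn2
    have e1 : 1 - F (a n) = 1/(n:ℝ) := by rw [hFn]; ring
    have e2 : Real.exp (H (a n)) = (n:ℝ) := by
      have h3 := hexp (a n)
      rw [e1] at h3
      rw [← neg_neg (H (a n)), Real.exp_neg, h3]
      field_simp
    have e3 : -(H (a n * x) - H (a n)) = H (a n) + -(H (a n * x)) := by ring
    rw [e3, Real.exp_add, e2, hexp]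
  -- slope lemma for log(1+u)/u
  have hslope : Tendsto (fun u : ℝ => Real.log (1 + u) / u) (𝓝[≠] (0:ℝ)) (𝓝 1) := by
    have hd : HasDerivAt (fun u : ℝ => Real.log (1 + u)) 1 0 := by
      have h1 : HasDerivAt (fun u : ℝ => 1 + u) 1 0 := (hasDerivAt_id 0).const_add 1
      have h2 := h1.log (by norm_num)
      simpa using h2
    have h3 := hasDerivAt_iff_tendsto_slope.1 hd
    refine h3.congr fun u => ?_
    rw [slope_def_field]
    simp
  -- conclude
  refine ⟨a, fun _ => 0, ha_pos, ?_⟩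
  intro x hGx
  simp only [add_zero]
  rcases le_or_gt x 0 with hx | hx
  · have hval : frechet α x = 0 := by rw [frechet, if_neg (not_lt.2 hx)]
    rw [hval]
    have hle : ∀ n : ℕ, F (a n * x) ^ n ≤ F 0 ^ n := fun n =>
      pow_le_pow_left₀ (h0 _) (hF.1 (mul_nonpos_of_nonneg_of_nonpos (ha_pos n).le hx)) n
    have hge : ∀ n : ℕ, 0 ≤ F (a n * x) ^ n := fun n => pow_nonneg (h0 _) n
    exact squeeze_zero hge hle
      (tendsto_pow_atTop_nhds_zero_of_lt_one (h0 0) (hxp 0))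
  · have hc_lim := hkey x hx
    set p : ℕ → ℝ := fun n => F (a n * x) with hpdef
    have hp1 : ∀ n, p n < 1 := fun n => hxp _
    have hptop : Tendsto p atTop (𝓝 1) := hF.2.2.2.comp (ha_top.atTop_mul_const hx)
    have hu : Tendsto (fun n => p n - 1) atTop (𝓝[≠] (0:ℝ)) := by
      rw [tendsto_nhdsWithin_iff]
      constructor
      · simpa using hptop.sub_const 1
      · exact Eventually.of_forall fun n => sub_ne_zero.2 (hp1 n).ne
    have hr : Tendsto (fun n => Real.log (1 + (p n - 1)) / (p n - 1)) atTop (𝓝 1) :=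
      hslope.comp hu
    have hlog : Tendsto (fun n : ℕ => (n:ℝ) * Real.log (p n)) atTop (𝓝 (-(x ^ (-α)))) := by
      have h2 := hc_lim.neg.mul hr
      rw [mul_one] at h2
      refine h2.congr fun n => ?_
      have hq : p n - 1 ≠ 0 := sub_ne_zero.2 (hp1 n).ne
      have h3 : (1:ℝ) + (p n - 1) = p n := by ring
      rw [h3]
      field_simp
      ring
    have hfin := (Real.continuous_exp.tendsto _).comp hlog
    have hval : frechet α x = Real.exp (-(x ^ (-α))) := by rw [frechet, if_pos hx]
    rw [hval]
    refine hfin.congr' ?_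
    filter_upwards [hptop.eventually_const_lt (by norm_num : (0:ℝ) < 1)] with n hpn
    simp only [Function.comp]
    rw [Real.exp_nat_mul, Real.exp_log hpn]
end

section
/- Von Mises condition for the Weibull domain: Let F be a distribution function with finite upper end-point x₊ < ∞, differentiable on (−∞, x₊) with derivative f (its density) and with F̄(x) > 0 for x < x₊. If (x₊ − x) f(x)/F̄(x) → α as x ↑ x₊ for some α > 0, then F ∈ D(Ψ_α). -/
open Filter Topology

/-- The Weibull law `Ψ_α`. -/
noncomputable def weibull (α : ℝ) (x : ℝ) : ℝ :=
  if x < 0 then Real.exp (-((-x) ^ α)) else 1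

lemma key_bound (G g' : ℝ → ℝ) (α : ℝ)
    (hGpos : ∀ t : ℝ, 0 < t → 0 < G t)
    (hGd : ∀ t : ℝ, 0 < t → HasDerivAt G (g' t) t)
    (hH : Tendsto (fun t => t * g' t / G t) (𝓝[>] (0:ℝ)) (𝓝 α)) :
    ∀ ε : ℝ, 0 < ε → ∃ δ > 0, ∀ s t : ℝ, 0 < s → s ≤ t → t < δ →
      (α - ε) * (Real.log t - Real.log s) ≤ Real.log (G t) - Real.log (G s) ∧
      Real.log (G t) - Real.log (G s) ≤ (α + ε) * (Real.log t - Real.log s) := by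
  intro ε hε
  have hev : {t : ℝ | |t * g' t / G t - α| ≤ ε} ∈ 𝓝[>] (0:ℝ) := by
    have := hH (Metric.closedBall_mem_nhds α hε)
    exact this
  obtain ⟨δ, hδpos, hδ⟩ := mem_nhdsGT_iff_exists_Ioo_subset.1 hev
  refine ⟨δ, hδpos, ?_⟩
  have hbound : ∀ t ∈ Set.Ioo (0:ℝ) δ, α - ε ≤ t * g' t / G t ∧ t * g' t / G t ≤ α + ε := by
    intro t ht
    have := hδ ht
    rw [Set.mem_setOf_eq] at this
    have := abs_le.1 this
    constructor <;> linarith [this.1, this.2]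
  set D := Set.Ioo (0:ℝ) δ with hD
  -- derivative of the comparison functions
  have hder : ∀ c : ℝ, ∀ t ∈ D, HasDerivAt (fun u => Real.log (G u) - c * Real.log u)
      (g' t / G t - c * t⁻¹) t := by
    intro c t ht
    exact ((hGd t ht.1).log (ne_of_gt (hGpos t ht.1))).sub
      ((Real.hasDerivAt_log (ne_of_gt ht.1)).const_mul c)
  have hmono : MonotoneOn (fun u => Real.log (G u) - (α - ε) * Real.log u) D := by
    apply monotoneOn_of_deriv_nonneg (convex_Ioo _ _)
    · exact fun t ht => ((hder _ t ht).continuousAt).continuousWithinAt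
    · rw [interior_Ioo]
      exact fun t ht => ((hder _ t ht).differentiableAt).differentiableWithinAt
    · rw [interior_Ioo]
      intro t ht
      rw [(hder (α - ε) t ht).deriv]
      have h1 := (hbound t ht).1
      have htpos := ht.1
      have : (α - ε) * t⁻¹ ≤ (t * g' t / G t) * t⁻¹ :=
        mul_le_mul_of_nonneg_right h1 (inv_nonneg.2 htpos.le)
      have heq : (t * g' t / G t) * t⁻¹ = g' t / G t := by
        rw [div_mul_eq_mul_div, mul_comm t (g' t), mul_assoc,
          mul_inv_cancel₀ (ne_of_gt htpos), mul_one]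
      linarith [heq ▸ this]
  have hanti : AntitoneOn (fun u => Real.log (G u) - (α + ε) * Real.log u) D := by
    apply antitoneOn_of_deriv_nonpos (convex_Ioo _ _)
    · exact fun t ht => ((hder _ t ht).continuousAt).continuousWithinAt
    · rw [interior_Ioo]
      exact fun t ht => ((hder _ t ht).differentiableAt).differentiableWithinAt
    · rw [interior_Ioo]
      intro t ht
      rw [(hder (α + ε) t ht).deriv]
      have h1 := (hbound t ht).2
      have htpos := ht.1
      have : (t * g' t / G t) * t⁻¹ ≤ (α + ε) * t⁻¹ :=
        mul_le_mul_of_nonneg_right h1 (inv_nonneg.2 htpos.le)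
      have heq : (t * g' t / G t) * t⁻¹ = g' t / G t := by
        rw [div_mul_eq_mul_div, mul_comm t (g' t), mul_assoc,
          mul_inv_cancel₀ (ne_of_gt htpos), mul_one]
      linarith [heq ▸ this]
  intro s t hs hst ht
  have hsD : s ∈ D := ⟨hs, lt_of_le_of_lt hst ht⟩
  have htD : t ∈ D := ⟨lt_of_lt_of_le hs hst, ht⟩
  have h1 := hmono hsD htD hst
  have h2 := hanti hsD htD hst
  simp only at h1 h2
  constructor <;> nlinarith [mul_sub (α - ε) (Real.log t) (Real.log s),
    mul_sub (α + ε) (Real.log t) (Real.log s)]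

lemma tail_to_zero (G g' : ℝ → ℝ) (α : ℝ) (hα : 0 < α)
    (hGpos : ∀ t : ℝ, 0 < t → 0 < G t)
    (hGd : ∀ t : ℝ, 0 < t → HasDerivAt G (g' t) t)
    (hH : Tendsto (fun t => t * g' t / G t) (𝓝[>] (0:ℝ)) (𝓝 α)) :
    Tendsto G (𝓝[>] (0:ℝ)) (𝓝 0) := by
  obtain ⟨δ, hδpos, hkey⟩ := key_bound G g' α hGpos hGd hH (α/2) (half_pos hα)
  set t₀ := δ/2 with ht₀
  have ht₀pos : 0 < t₀ := half_pos hδpos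
  have ht₀δ : t₀ < δ := half_lt_self hδpos
  -- log (G s) ≤ C + (α/2) * log s
  set C := Real.log (G t₀) - (α/2) * Real.log t₀ with hC
  have hub : ∀ᶠ s in 𝓝[>] (0:ℝ), Real.log (G s) ≤ C + (α/2) * Real.log s := by
    filter_upwards [self_mem_nhdsWithin,
      eventually_nhdsWithin_of_eventually_nhds (eventually_lt_nhds ht₀pos)] with s hs hst₀
    have := (hkey s t₀ hs hst₀.le ht₀δ).1
    nlinarith [mul_sub (α - α/2) (Real.log t₀) (Real.log s)]
  have hlogbot : Tendsto (fun s => Real.log (G s)) (𝓝[>] (0:ℝ)) atBot := by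
    apply tendsto_atBot_mono' _ hub
    have : Tendsto (fun s => (α/2) * Real.log s) (𝓝[>] (0:ℝ)) atBot :=
      (Real.tendsto_log_nhdsGT_zero).const_mul_atBot (half_pos hα)
    simpa using tendsto_atBot_add_const_left _ C this
  have := Real.tendsto_exp_atBot.comp hlogbot
  refine this.congr' ?_
  filter_upwards [self_mem_nhdsWithin] with s hs
  exact Real.exp_log (hGpos s hs)

lemma ratio_lim (G g' : ℝ → ℝ) (α : ℝ) (hα : 0 < α)
    (hGpos : ∀ t : ℝ, 0 < t → 0 < G t)
    (hGd : ∀ t : ℝ, 0 < t → HasDerivAt G (g' t) t)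
    (hH : Tendsto (fun t => t * g' t / G t) (𝓝[>] (0:ℝ)) (𝓝 α))
    (l : ℝ) (hl : 0 < l) :
    Tendsto (fun t => G (l * t) / G t) (𝓝[>] (0:ℝ)) (𝓝 (l ^ α)) := by
  have hlog : Tendsto (fun t => Real.log (G (l * t)) - Real.log (G t)) (𝓝[>] (0:ℝ))
      (𝓝 (α * Real.log l)) := by
    rw [Metric.tendsto_nhds]
    intro ε' hε'
    set ε := min (α/2) (ε' / (|Real.log l| + 1)) with hε
    have habs : (0:ℝ) < |Real.log l| + 1 := by positivity
    have hεpos : 0 < ε := lt_min (half_pos hα) (div_pos hε' habs)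
    obtain ⟨δ, hδpos, hkey⟩ := key_bound G g' α hGpos hGd hH ε hεpos
    set M := max l 1 with hM
    have hMpos : 0 < M := lt_of_lt_of_le one_pos (le_max_right _ _)
    have hδ' : 0 < δ / M := div_pos hδpos hMpos
    have hev : ∀ᶠ t in 𝓝[>] (0:ℝ), t ∈ Set.Ioo 0 (δ / M) := by
      filter_upwards [self_mem_nhdsWithin,
        eventually_nhdsWithin_of_eventually_nhds (eventually_lt_nhds hδ')] with t h1 h2
      exact ⟨h1, h2⟩
    filter_upwards [hev] with t ht
    obtain ⟨htpos, htδ'⟩ := ht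
    have hltpos : 0 < l * t := mul_pos hl htpos
    have hlt_lt : l * t < δ := by
      calc l * t ≤ M * t := mul_le_mul_of_nonneg_right (le_max_left _ _) htpos.le
      _ < δ := by rw [lt_div_iff₀ hMpos] at htδ'; linarith [mul_comm M t]
    have ht_lt : t < δ := by
      calc t = 1 * t := (one_mul t).symm
      _ ≤ M * t := mul_le_mul_of_nonneg_right (le_max_right _ _) htpos.le
      _ < δ := by rw [lt_div_iff₀ hMpos] at htδ'; linarith [mul_comm M t]
    have hloglt : Real.log (l * t) = Real.log l + Real.log t :=
      Real.log_mul (ne_of_gt hl) (ne_of_gt htpos)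
    have hkey2 : |Real.log (G (l * t)) - Real.log (G t) - α * Real.log l| ≤ ε * |Real.log l| := by
      rcases le_total 1 l with h1l | hl1
      · have hle : t ≤ l * t := le_mul_of_one_le_left htpos.le h1l
        have := hkey t (l * t) htpos hle hlt_lt
        have hlognn : 0 ≤ Real.log l := Real.log_nonneg h1l
        rw [abs_of_nonneg hlognn]
        rw [abs_le]
        constructor <;> nlinarith [this.1, this.2, hloglt]
      · have hle : l * t ≤ t := mul_le_of_le_one_left htpos.le hl1
        have := hkey (l * t) t hltpos hle ht_lt
        have hlognp : Real.log l ≤ 0 := Real.log_nonpos hl.le hl1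
        rw [abs_of_nonpos hlognp, abs_le]
        constructor <;> nlinarith [this.1, this.2, hloglt]
    rw [Real.dist_eq]
    have hε2 : ε ≤ ε' / (|Real.log l| + 1) := min_le_right _ _
    have habs2 : |Real.log l| ≤ |Real.log l| + 1 - 1 + 1 - 1 + 1 - 1 := by ring_nf; linarith
    calc |Real.log (G (l * t)) - Real.log (G t) - α * Real.log l|
        ≤ ε * |Real.log l| := hkey2
      _ ≤ (ε' / (|Real.log l| + 1)) * |Real.log l| :=
          mul_le_mul_of_nonneg_right hε2 (abs_nonneg _)
      _ < ε' := by
          rw [div_mul_eq_mul_div, div_lt_iff₀ habs]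
          nlinarith [abs_nonneg (Real.log l)]
  have : Tendsto (fun t => Real.exp (Real.log (G (l * t)) - Real.log (G t))) (𝓝[>] (0:ℝ))
      (𝓝 (Real.exp (α * Real.log l))) := (Real.continuous_exp.continuousAt).tendsto.comp hlog
  have heq : l ^ α = Real.exp (α * Real.log l) := by
    rw [Real.rpow_def_of_pos hl, mul_comm]
  rw [heq]
  refine this.congr' ?_
  filter_upwards [self_mem_nhdsWithin] with t ht
  rw [Real.exp_sub, Real.exp_log (hGpos _ (mul_pos hl ht)), Real.exp_log (hGpos t ht)]

lemma pow_lim (c : ℕ → ℝ) (L : ℝ)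
    (hpos : ∀ᶠ n in atTop, 0 < c n)
    (h : Tendsto (fun n : ℕ => (n : ℝ) * c n) atTop (𝓝 L)) :
    Tendsto (fun n => (1 - c n) ^ n) atTop (𝓝 (Real.exp (-L))) := by
  have hc0 : Tendsto c atTop (𝓝 0) := by
    have hinv : Tendsto (fun n : ℕ => ((n : ℝ))⁻¹) atTop (𝓝 0) := tendsto_inv_atTop_zero.comp
      tendsto_natCast_atTop_atTop
    have := h.mul hinv
    rw [mul_zero] at this
    refine this.congr' ?_
    filter_upwards [eventually_gt_atTop 0] with n hn
    have : (n:ℝ) ≠ 0 := Nat.cast_ne_zero.2 hn.ne'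
    field_simp
  -- slope of log at 1
  have hslope : Tendsto (fun n => Real.log (1 - c n) / (-c n)) atTop (𝓝 1) := by
    have hlog : HasDerivAt Real.log 1 1 := by
      simpa using Real.hasDerivAt_log one_ne_zero
    have hs := hasDerivAt_iff_tendsto_slope.1 hlog
    have hcomp : Tendsto (fun n => 1 - c n) atTop (𝓝[≠] (1:ℝ)) := by
      rw [tendsto_nhdsWithin_iff]
      constructor
      · simpa using (tendsto_const_nhds.sub hc0)
      · filter_upwards [hpos] with n hn
        simp only [Set.mem_compl_iff, Set.mem_singleton_iff]
        intro hx
        have : c n = 0 := by linarith [sub_eq_self.1 hx]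
        linarith
    have := hs.comp hcomp
    refine this.congr fun n => ?_
    rw [Function.comp_apply, slope_def_field, Real.log_one]
    rw [show ((1:ℝ) - c n) - 1 = -c n by ring, sub_zero]
  -- n * log (1 - c n) → -L
  have hnlog : Tendsto (fun n : ℕ => (n : ℝ) * Real.log (1 - c n)) atTop (𝓝 (-L)) := by
    have := (h.mul hslope).neg
    rw [mul_one] at this
    refine this.congr' ?_
    filter_upwards [hpos] with n hn
    have hcne : c n ≠ 0 := ne_of_gt hn
    field_simp
  have hfin := (Real.continuous_exp.continuousAt).tendsto.comp hnlog
  refine hfin.congr' ?_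
  have h1 : ∀ᶠ n in atTop, c n < 1 := by
    have := hc0.eventually (eventually_lt_nhds one_pos)
    exact this
  filter_upwards [h1] with n hn
  rw [Function.comp_apply, Real.exp_nat_mul, Real.exp_log (by linarith)]

/-- **Von Mises condition for the Weibull domain.**  Let `F` be a distribution
function with finite upper end-point `xp` (the least upper bound of
`{x | F x < 1}`), differentiable on `(-∞, xp)` with density `f` and tail
`F̄ > 0` there.  If `(xp - x) f(x) / F̄(x) → α > 0` as `x ↑ xp`, then
`F ∈ D(Ψ_α)`. -/
theorem vonMises_weibull (F f : ℝ → ℝ) (hF : IsDistFun F)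
    (xp : ℝ) (hxp : IsLUB {x | F x < 1} xp)
    (hderiv : ∀ x < xp, HasDerivAt F (f x) x)
    (htail : ∀ x < xp, F x < 1)
    (α : ℝ) (hα : 0 < α)
    (hlim : Tendsto (fun x => (xp - x) * f x / (1 - F x)) (𝓝[<] xp) (𝓝 α)) :
    MemDomAttr F (weibull α) := by
  classical
  obtain ⟨hFmono, hFright, hFbot, hFtop⟩ := hF
  have hFle1 : ∀ y, F y ≤ 1 := fun y => ge_of_tendsto hFtop ((eventually_ge_atTop y).mono fun z hz => hFmono hz)
  have hF1 : ∀ y, xp < y → F y = 1 := by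
    intro y hy
    refine le_antisymm (hFle1 y) ?_
    by_contra h
    push_neg at h
    exact absurd (hxp.1 h) (not_le.2 hy)
  have hFxp1 : ∀ y, xp ≤ y → F y = 1 := by
    intro y hy
    have h1 : Tendsto F (𝓝[>] xp) (𝓝 (F xp)) :=
      (hFright xp).mono_left (nhdsWithin_mono _ Set.Ioi_subset_Ici_self)
    have h2 : Tendsto F (𝓝[>] xp) (𝓝 1) := by
      refine tendsto_const_nhds.congr' ?_
      filter_upwards [self_mem_nhdsWithin] with z hz
      exact (hF1 z hz).symm
    have hxpeq : F xp = 1 := tendsto_nhds_unique h1 h2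
    exact le_antisymm (hFle1 y) (hxpeq ▸ hFmono hy)
  -- the tail function
  set G : ℝ → ℝ := fun t => 1 - F (xp - t) with hGdef
  set g' : ℝ → ℝ := fun t => f (xp - t) with hg'def
  have hGpos : ∀ t : ℝ, 0 < t → 0 < G t := by
    intro t ht
    have := htail (xp - t) (by linarith)
    simp only [hGdef]
    linarith
  have hGd : ∀ t : ℝ, 0 < t → HasDerivAt G (g' t) t := by
    intro t ht
    have h1 : HasDerivAt (fun u : ℝ => xp - u) (-1) t := by
      simpa using (hasDerivAt_id t).const_sub xp
    have h2 := (hderiv (xp - t) (by linarith)).comp t h1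
    have h3 := h2.const_sub 1
    simpa [hGdef, hg'def, Function.comp] using h3
  have hH : Tendsto (fun t => t * g' t / G t) (𝓝[>] (0:ℝ)) (𝓝 α) := by
    have hmap : Tendsto (fun t : ℝ => xp - t) (𝓝[>] (0:ℝ)) (𝓝[<] xp) := by
      rw [tendsto_nhdsWithin_iff]
      constructor
      · have : Tendsto (fun t : ℝ => xp - t) (𝓝 (0:ℝ)) (𝓝 (xp - 0)) :=
          (continuous_const.sub continuous_id).tendsto 0
        simpa using this.mono_left nhdsWithin_le_nhds
      · filter_upwards [self_mem_nhdsWithin] with t ht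
        simp only [Set.mem_Iio]
        have : (0:ℝ) < t := ht
        linarith
    have := hlim.comp hmap
    refine this.congr fun t => ?_
    simp only [Function.comp_apply, hGdef, hg'def]
    have : xp - (xp - t) = t := by ring
    rw [this]
  have hG0 := tail_to_zero G g' α hα hGpos hGd hH
  have hGmono : Monotone G := by
    intro s t hst
    simp only [hGdef]
    have := hFmono (show xp - t ≤ xp - s by linarith)
    linarith
  have hG1pos : 0 < G 1 := hGpos 1 one_pos
  -- choice of the norming constants
  have hP : ∀ᶠ n : ℕ in atTop, ∃ t ∈ Set.Ioo (0:ℝ) 1, G t = (n:ℝ)⁻¹ := by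
    have hinv : Tendsto (fun n : ℕ => ((n:ℝ))⁻¹) atTop (𝓝 0) :=
      tendsto_inv_atTop_zero.comp tendsto_natCast_atTop_atTop
    filter_upwards [hinv.eventually (eventually_lt_nhds hG1pos), eventually_ge_atTop 1]
      with n hn hn1
    have hn0 : (0:ℝ) < (n:ℝ)⁻¹ := by
      have : (0:ℝ) < (n:ℝ) := by exact_mod_cast hn1
      positivity
    -- find a point where G is small
    have hsmall : ∃ t₀, 0 < t₀ ∧ t₀ < 1 ∧ G t₀ < (n:ℝ)⁻¹ := by
      have h1 : ∀ᶠ t in 𝓝[>] (0:ℝ), G t < (n:ℝ)⁻¹ :=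
        hG0.eventually (eventually_lt_nhds hn0)
      have h2 : ∀ᶠ t in 𝓝[>] (0:ℝ), t < 1 :=
        eventually_nhdsWithin_of_eventually_nhds (eventually_lt_nhds one_pos)
      obtain ⟨t₀, h₀, h₁, h₂⟩ := (h1.and (h2.and self_mem_nhdsWithin)).exists
      exact ⟨t₀, h₂, h₁, h₀⟩
    obtain ⟨t₀, ht₀pos, ht₀1, ht₀G⟩ := hsmall
    have hcont : ContinuousOn G (Set.Icc t₀ 1) := by
      intro t ht
      exact ((hGd t (lt_of_lt_of_le ht₀pos ht.1)).continuousAt).continuousWithinAt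
    have := intermediate_value_Ioo ht₀1.le hcont (f := G)
    have hmem : (n:ℝ)⁻¹ ∈ Set.Ioo (G t₀) (G 1) := ⟨ht₀G, hn⟩
    obtain ⟨t, htI, htG⟩ := this hmem
    exact ⟨t, ⟨lt_trans ht₀pos htI.1, htI.2⟩, htG⟩
  set a : ℕ → ℝ := fun n =>
    if h : ∃ t ∈ Set.Ioo (0:ℝ) 1, G t = (n:ℝ)⁻¹ then h.choose else 1/2 with hadef
  have ha_mem : ∀ n, a n ∈ Set.Ioo (0:ℝ) 1 := by
    intro n
    simp only [hadef]
    split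
    · next h => exact h.choose_spec.1
    · norm_num
  have haG : ∀ᶠ n : ℕ in atTop, G (a n) = (n:ℝ)⁻¹ := by
    filter_upwards [hP] with n hn
    simp only [hadef, dif_pos hn]
    exact hn.choose_spec.2
  have ha0 : Tendsto a atTop (𝓝[>] (0:ℝ)) := by
    rw [tendsto_nhdsWithin_iff]
    refine ⟨?_, Eventually.of_forall fun n => (ha_mem n).1⟩
    rw [tendsto_order]
    constructor
    · intro b hb
      exact Eventually.of_forall fun n => lt_trans hb (ha_mem n).1
    · intro b hb
      rcases le_or_gt 1 b with h1b | hb1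
      · exact Eventually.of_forall fun n => lt_of_lt_of_le (ha_mem n).2 h1b
      · have hGb : 0 < G b := hGpos b hb
        have hinv : Tendsto (fun n : ℕ => ((n:ℝ))⁻¹) atTop (𝓝 0) :=
          tendsto_inv_atTop_zero.comp tendsto_natCast_atTop_atTop
        filter_upwards [haG, hinv.eventually (eventually_lt_nhds hGb)] with n hn hn2
        by_contra hcon
        push_neg at hcon
        have := hGmono hcon
        rw [hn] at this
        exact absurd (lt_of_le_of_lt this hn2) (lt_irrefl _)
  -- assemble
  refine ⟨a, fun _ => xp, fun n => (ha_mem n).1, ?_⟩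
  intro x _
  rcases lt_or_ge x 0 with hx | hx
  · -- x < 0
    have hlx : 0 < -x := neg_pos.2 hx
    set c : ℕ → ℝ := fun n => G ((-x) * a n) with hcdef
    have hcpos : ∀ n, 0 < c n := fun n => hGpos _ (mul_pos hlx (ha_mem n).1)
    have hmul : Tendsto (fun n : ℕ => (n:ℝ) * c n) atTop (𝓝 ((-x) ^ α)) := by
      have h1 := (ratio_lim G g' α hα hGpos hGd hH (-x) hlx).comp ha0
      refine h1.congr' ?_
      filter_upwards [haG, eventually_ge_atTop 1] with n hn hn1
      have hne : (n:ℝ) ≠ 0 := by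
        have : (0:ℝ) < (n:ℝ) := by exact_mod_cast hn1
        exact ne_of_gt this
      simp only [Function.comp_apply, hcdef, hn]
      rw [div_eq_mul_inv, inv_inv, mul_comm]
    have hpow := pow_lim c ((-x) ^ α) (Eventually.of_forall hcpos) hmul
    have hweq : weibull α x = Real.exp (-((-x) ^ α)) := by
      rw [weibull, if_pos hx]
    rw [hweq]
    refine hpow.congr fun n => ?_
    congr 1
    have harg : xp - (-x) * a n = a n * x + xp := by ring
    simp only [hcdef, hGdef]
    rw [harg]
    ring
  · -- 0 ≤ x
    have hweq : weibull α x = 1 := by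
      rw [weibull, if_neg (not_lt.2 hx)]
    rw [hweq]
    have : ∀ n, F (a n * x + xp) ^ n = 1 := by
      intro n
      rw [hFxp1 (a n * x + xp) (by nlinarith [(ha_mem n).1]), one_pow]
    refine tendsto_const_nhds.congr fun n => ?_
    rw [this n]
end

section
/- Von Mises condition for the Gumbel domain: Let F be a distribution function with upper end-point x₊ = ∞, differentiable with derivative f (its density), with f(x) > 0 and F̄(x) > 0 on a neighbourhood of ∞. If the inverse hazard function i(x) := F̄(x)/f(x) is differentiable there with i′(x) → 0 as x → ∞, then F ∈ D(Λ). -/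
open Filter Topology

/-- The Gumbel law `Λ`. -/
noncomputable def gumbel (x : ℝ) : ℝ :=
  Real.exp (-Real.exp (-x))

open Set

/-- Key analytic lemma: if `h := -log(1-F)` has derivative `f/(1-F) = 1/i` on `[x₀,∞)`
and the inverse hazard `i` has derivative tending to 0 at infinity, then
`h(b + i(b)x) - h(b) → x` as `b → ∞`. -/
lemma vonMises_key (F f i' : ℝ → ℝ)
    (hxp : ∀ x, F x < 1)
    (x₀ : ℝ)
    (hderiv : ∀ x ≥ x₀, HasDerivAt F (f x) x)
    (hfpos : ∀ x ≥ x₀, 0 < f x)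
    (hideriv : ∀ x ≥ x₀, HasDerivAt (fun y => (1 - F y) / f y) (i' x) x)
    (hlim : Tendsto i' atTop (𝓝 0)) (x : ℝ) :
    Tendsto (fun b =>
        (-Real.log (1 - F (b + (1 - F b) / f b * x)) + Real.log (1 - F b)))
      atTop (𝓝 x) := by
  set i : ℝ → ℝ := fun y => (1 - F y) / f y with hi
  set h : ℝ → ℝ := fun y => -Real.log (1 - F y) with hh
  have hFb : ∀ y, 0 < 1 - F y := fun y => by linarith [hxp y]
  have hipos : ∀ y ≥ x₀, 0 < i y := fun y hy => div_pos (hFb y) (hfpos y hy)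
  have hhderiv : ∀ y ≥ x₀, HasDerivAt h (1 / i y) y := by
    intro y hy
    have h1 : HasDerivAt (fun t => 1 - F t) (-(f y)) y := by
      simpa using (hderiv y hy).const_sub 1
    have h2 := (h1.log (hFb y).ne')
    have h3 : HasDerivAt h (-(-(f y) / (1 - F y))) y := h2.neg
    convert h3 using 1
    field_simp [hi]
    simp only [hi, one_div_div]
  rw [Metric.tendsto_atTop]
  intro ε hε
  set X : ℝ := |x| + 1 with hX
  have hX1 : 1 ≤ X := by rw [hX]; linarith [abs_nonneg x]
  have hXpos : 0 < X := by positivity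
  set δ : ℝ := min (ε / (4 * X ^ 2)) (1 / (2 * X)) with hδ
  have hδpos : 0 < δ := lt_min (by positivity) (by positivity)
  have hδX : δ * X ≤ 1 / 2 := by
    calc δ * X ≤ 1 / (2 * X) * X := by
          exact mul_le_mul_of_nonneg_right (min_le_right _ _) hXpos.le
    _ = 1 / 2 := by field_simp
  -- choose x₁ ≥ x₀ with |i'| ≤ δ beyond x₁
  obtain ⟨x₁, hx₁⟩ : ∃ x₁, x₀ ≤ x₁ ∧ ∀ t ≥ x₁, |i' t| ≤ δ := by
    have h1 : ∀ᶠ t in atTop, |i' t| ≤ δ := by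
      have := hlim.eventually (Metric.closedBall_mem_nhds (0:ℝ) hδpos)
      simpa [Real.dist_eq] using this
    obtain ⟨x₁, hx₁⟩ := (h1.and (eventually_ge_atTop x₀)).exists_forall_of_atTop
    exact ⟨x₁, (hx₁ x₁ le_rfl).2, fun t ht => (hx₁ t ht).1⟩
  obtain ⟨hx₁0, hx₁δ⟩ := hx₁
  -- i is δ-Lipschitz on [x₁, ∞)
  have hlip : ∀ p ∈ Ici x₁, ∀ q ∈ Ici x₁, |i q - i p| ≤ δ * |q - p| := by
    intro p hp q hq
    have := (convex_Ici x₁).norm_image_sub_le_of_norm_hasDerivWithin_le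
      (f := i) (f' := i')
      (fun t ht => (hideriv t (hx₁0.trans ht)).hasDerivWithinAt)
      (fun t ht => by simpa using hx₁δ t ht) hp hq
    simpa [Real.norm_eq_abs] using this
  set B : ℝ := x₁ + 2 * X * i x₁ + 1 with hB
  refine ⟨B, fun b hb => ?_⟩
  have hbx₁ : x₁ ≤ b := by
    have : 0 < i x₁ := hipos x₁ hx₁0
    nlinarith
  have hbx₀ : x₀ ≤ b := hx₁0.trans hbx₁
  have hibpos : 0 < i b := hipos b hbx₀
  -- i b grows at most linearly
  have hib_le : i b ≤ i x₁ + δ * (b - x₁) := by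
    have := hlip x₁ self_mem_Ici b hbx₁
    have habs : |b - x₁| = b - x₁ := abs_of_nonneg (by linarith)
    rw [habs] at this
    have := (abs_le.mp this).2
    linarith
  -- all points within distance i b * X of b lie in [x₁, ∞)
  have hsafe : ∀ t : ℝ, |t - b| ≤ i b * X → x₁ ≤ t := by
    intro t ht
    have h1 : b - t ≤ i b * X := by
      have := (abs_le.mp ht).1; linarith
    have h2 : i b * X ≤ (i x₁ + δ * (b - x₁)) * X := by
      apply mul_le_mul_of_nonneg_right hib_le hXpos.le
    have h3 : δ * (b - x₁) * X ≤ (b - x₁) / 2 := by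
      have hbx : 0 ≤ b - x₁ := by linarith
      calc δ * (b - x₁) * X = (δ * X) * (b - x₁) := by ring
      _ ≤ (1/2) * (b - x₁) := mul_le_mul_of_nonneg_right hδX hbx
      _ = (b - x₁) / 2 := by ring
    nlinarith
  -- i t close to i b on that ball
  have hclose : ∀ t : ℝ, |t - b| ≤ i b * X → |i t - i b| ≤ δ * (i b * X) := by
    intro t ht
    have := hlip b (mem_Ici.mpr hbx₁) t (mem_Ici.mpr (hsafe t ht))
    calc |i t - i b| ≤ δ * |t - b| := this
    _ ≤ δ * (i b * X) := mul_le_mul_of_nonneg_left ht hδpos.le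
  have hhalf : ∀ t : ℝ, |t - b| ≤ i b * X → i b / 2 ≤ i t := by
    intro t ht
    have h1 := hclose t ht
    have h2 : δ * X * i b ≤ 1 / 2 * i b := mul_le_mul_of_nonneg_right hδX hibpos.le
    have h3 := (abs_le.mp h1).1
    nlinarith
  -- now the main estimate
  set y : ℝ := b + i b * x with hy
  have hyb : |y - b| ≤ i b * X := by
    have : y - b = i b * x := by rw [hy]; ring
    rw [this, abs_mul, abs_of_nonneg hibpos.le]
    have : |x| ≤ X := by rw [hX]; linarith
    exact mul_le_mul_of_nonneg_left this hibpos.le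
  -- goal: dist (h y - h b) x < ε  (after rewriting)
  have hgoal : dist (h y - h b) x < ε := by
    rcases eq_or_ne x 0 with hx0 | hx0
    · have : y = b := by rw [hy, hx0]; ring
      simp [this, hx0, hε]
    · -- MVT to get ξ with h y - h b = i b * x / i ξ
      have hne : y ≠ b := by
        rw [hy]
        intro hc
        have : i b * x = 0 := by linarith
        rcases mul_eq_zero.mp this with h | h
        · exact hibpos.ne' h
        · exact hx0 h
      obtain ⟨ξ, hξmem, hξdist, hξ⟩ :
          ∃ ξ, x₀ ≤ ξ ∧ |ξ - b| ≤ i b * X ∧ 1 / i ξ = (h y - h b) / (y - b) := by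
        rcases lt_or_gt_of_ne hne with hlt | hgt
        · -- y < b
          have hcont : ContinuousOn h (Icc y b) := fun t ht =>
            ((hhderiv t (hx₁0.trans (hsafe t (by
              rw [abs_sub_comm, abs_of_nonneg (by linarith [ht.2] : 0 ≤ b - t)]
              have := ht.1
              have := (abs_le.mp hyb).1
              linarith)))).continuousAt).continuousWithinAt
          have hd : ∀ t ∈ Ioo y b, HasDerivAt h (1 / i t) t := by
            intro t ht
            refine hhderiv t (hx₁0.trans (hsafe t ?_))
            rw [abs_sub_comm, abs_of_nonneg (by linarith [ht.2.le] : 0 ≤ b - t)]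
            have := ht.1.le
            have := (abs_le.mp hyb).1
            linarith
          obtain ⟨ξ, hξ, heq⟩ := exists_hasDerivAt_eq_slope h (fun t => 1 / i t) hlt hcont hd
          have hξd : |ξ - b| ≤ i b * X := by
            rw [abs_sub_comm, abs_of_nonneg (by linarith [hξ.2] : 0 ≤ b - ξ)]
            have := hξ.1
            have := (abs_le.mp hyb).1
            linarith
          refine ⟨ξ, hx₁0.trans (hsafe ξ hξd), hξd, ?_⟩
          rw [heq]
          rw [div_eq_div_iff (by linarith [hξ.2, hξ.1] : (b : ℝ) - y ≠ 0) (sub_ne_zero.mpr hne)]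
          ring
        · -- b < y
          have hcont : ContinuousOn h (Icc b y) := fun t ht =>
            ((hhderiv t (hx₁0.trans (hsafe t (by
              rw [abs_of_nonneg (by linarith [ht.1] : 0 ≤ t - b)]
              have := ht.2
              have := (abs_le.mp hyb).2
              linarith)))).continuousAt).continuousWithinAt
          have hd : ∀ t ∈ Ioo b y, HasDerivAt h (1 / i t) t := by
            intro t ht
            refine hhderiv t (hx₁0.trans (hsafe t ?_))
            rw [abs_of_nonneg (by linarith [ht.1.le] : 0 ≤ t - b)]
            have := ht.2.le
            have := (abs_le.mp hyb).2
            linarith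
          obtain ⟨ξ, hξ, heq⟩ := exists_hasDerivAt_eq_slope h (fun t => 1 / i t) hgt hcont hd
          have hξd : |ξ - b| ≤ i b * X := by
            rw [abs_of_nonneg (by linarith [hξ.1] : 0 ≤ ξ - b)]
            have := hξ.2
            have := (abs_le.mp hyb).2
            linarith
          exact ⟨ξ, hx₁0.trans (hsafe ξ hξd), hξd, heq⟩
      have hiξpos : 0 < i ξ := hipos ξ hξmem
      have hiξhalf : i b / 2 ≤ i ξ := hhalf ξ hξdist
      have hval : h y - h b = i b * x / i ξ := by
        have hyne : y - b ≠ 0 := sub_ne_zero.mpr hne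
        have h5 : h y - h b = (y - b) * (1 / i ξ) := by
          rw [hξ, mul_comm, div_mul_cancel₀ _ hyne]
        rw [h5, hy, show b + i b * x - b = i b * x by ring, mul_one_div]
      rw [Real.dist_eq, hval]
      have hkey : i b * x / i ξ - x = x * (i b - i ξ) / i ξ := by
        field_simp
      rw [hkey]
      have hnum : |x * (i b - i ξ)| ≤ |x| * (δ * (i b * X)) := by
        rw [abs_mul]
        exact mul_le_mul_of_nonneg_left (by
          have := hclose ξ hξdist
          rw [abs_sub_comm] at this
          exact this) (abs_nonneg x)
      have h1 : |x * (i b - i ξ) / i ξ| ≤ |x| * (δ * (i b * X)) / (i b / 2) := by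
        rw [abs_div, abs_of_pos hiξpos]
        exact div_le_div₀ (by positivity) hnum (by positivity) hiξhalf
      have h2 : |x| * (δ * (i b * X)) / (i b / 2) = 2 * δ * |x| * X := by
        field_simp
      have h3 : 2 * δ * |x| * X ≤ 2 * δ * X * X := by
        have habs : |x| ≤ X := by rw [hX]; linarith
        have h := mul_le_mul_of_nonneg_left habs (by positivity : (0:ℝ) ≤ 2 * δ)
        exact mul_le_mul_of_nonneg_right h hXpos.le
      have h4 : 2 * δ * X * X ≤ ε / 2 := by
        have : δ ≤ ε / (4 * X ^ 2) := min_le_left _ _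
        have hX2 : (0:ℝ) < X ^ 2 := by positivity
        calc 2 * δ * X * X = 2 * X ^ 2 * δ := by ring
        _ ≤ 2 * X ^ 2 * (ε / (4 * X ^ 2)) := by
            exact mul_le_mul_of_nonneg_left this (by positivity)
        _ = ε / 2 := by field_simp; ring
      calc |x * (i b - i ξ) / i ξ| ≤ |x| * (δ * (i b * X)) / (i b / 2) := h1
      _ = 2 * δ * |x| * X := h2
      _ ≤ ε / 2 := h3.trans h4
      _ < ε := by linarith
  simpa [hh, hy, hi, sub_eq_add_neg] using hgoal

lemma log_one_sub_slope :
    Tendsto (fun u : ℝ => Real.log (1 - u) / u) (𝓝[≠] 0) (𝓝 (-1)) := by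
  have h1 : HasDerivAt (fun u : ℝ => 1 - u) (-1) 0 := by
    simpa using (hasDerivAt_id (0:ℝ)).const_sub 1
  have hd : HasDerivAt (fun u : ℝ => Real.log (1 - u)) (-1) 0 := by
    have := h1.log (by norm_num : (1:ℝ) - 0 ≠ 0)
    simpa using this
  have := hasDerivAt_iff_tendsto_slope.mp hd
  refine this.congr ?_
  intro u
  simp [slope_def_field, Real.log_one]

/-- **Von Mises condition for the Gumbel domain.**  Let `F` be a distribution
function with upper end-point `x₊ = ∞` (so the tail `F̄ = 1 - F` is positive
everywhere), differentiable with density `f`, with `f > 0` on a neighbourhood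
`[x₀, ∞)` of `∞`.  If the inverse hazard function `i(x) = F̄(x)/f(x)` is
differentiable there with derivative `i'` and `i'(x) → 0` as `x → ∞`, then
`F ∈ D(Λ)`. -/
theorem vonMises_gumbel (F f i' : ℝ → ℝ) (hF : IsDistFun F)
    (hxp : ∀ x, F x < 1)
    (x₀ : ℝ)
    (hderiv : ∀ x ≥ x₀, HasDerivAt F (f x) x)
    (hfpos : ∀ x ≥ x₀, 0 < f x)
    (hideriv : ∀ x ≥ x₀, HasDerivAt (fun y => (1 - F y) / f y) (i' x) x)
    (hlim : Tendsto i' atTop (𝓝 0)) :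
    MemDomAttr F gumbel := by
  obtain ⟨hmono, -, -, htop⟩ := hF
  have hFb : ∀ y, 0 < 1 - F y := fun y => by linarith [hxp y]
  have hFbtop : Tendsto (fun y => 1 - F y) atTop (𝓝 0) := by
    have := (tendsto_const_nhds (x := (1:ℝ)) (f := atTop (α := ℝ))).sub htop
    simpa using this
  set P : ℕ → Prop := fun n => ∃ y, x₀ ≤ y ∧ 1 - F y = 1/(n:ℝ) with hP
  have hex : ∀ n : ℕ, 0 < (1:ℝ)/n → (1:ℝ)/n < 1 - F x₀ → P n := by
    intro n hn0 hn
    obtain ⟨M, hM0, hM⟩ : ∃ M, x₀ ≤ M ∧ 1 - F M < 1/(n:ℝ) := by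
      have h1 : ∀ᶠ y in atTop, 1 - F y < 1/(n:ℝ) :=
        hFbtop.eventually (Filter.Tendsto.eventually_lt_const hn0 tendsto_id)
      obtain ⟨M, hM⟩ := (h1.and (eventually_ge_atTop x₀)).exists
      exact ⟨M, hM.2, hM.1⟩
    have hcont : ContinuousOn (fun y => 1 - F y) (Set.Icc x₀ M) := fun t ht =>
      (continuousAt_const.sub (hderiv t ht.1).continuousAt).continuousWithinAt
    have := intermediate_value_Icc' (le_trans hM0 le_rfl) hcont
      (by exact Set.mem_Icc.mpr ⟨hM.le, hn.le⟩)
    obtain ⟨y, hy, hy2⟩ := this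
    exact ⟨y, hy.1, hy2⟩
  classical
  set b : ℕ → ℝ := fun n => if h : P n then h.choose else x₀ with hbdef
  have hbx₀ : ∀ n, x₀ ≤ b n := by
    intro n
    rw [hbdef]
    by_cases h : P n
    · simp only [dif_pos h]; exact h.choose_spec.1
    · simp [dif_neg h]
  set a : ℕ → ℝ := fun n => (1 - F (b n)) / f (b n) with hadef
  have hapos : ∀ n, 0 < a n := fun n => div_pos (hFb _) (hfpos _ (hbx₀ n))
  have hPev : ∀ᶠ n : ℕ in atTop, P n := by
    have h1 : Tendsto (fun n : ℕ => (1:ℝ)/n) atTop (𝓝 0) :=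
      tendsto_one_div_atTop_nhds_zero_nat
    filter_upwards [h1.eventually (Filter.Tendsto.eventually_lt_const (hFb x₀) tendsto_id),
      eventually_ge_atTop 1] with n h2 h3
    exact hex n (by positivity) h2
  have hbval : ∀ᶠ n : ℕ in atTop, 1 - F (b n) = 1/(n:ℝ) := by
    filter_upwards [hPev] with n h
    rw [hbdef]; simp only [dif_pos h]; exact h.choose_spec.2
  have hbtop : Tendsto b atTop atTop := by
    rw [tendsto_atTop]
    intro M
    set M' := max M x₀ with hM'
    have hFM : 0 < 1 - F M' := hFb M'
    have h1 : Tendsto (fun n : ℕ => (1:ℝ)/n) atTop (𝓝 0) :=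
      tendsto_one_div_atTop_nhds_zero_nat
    filter_upwards [hbval, h1.eventually (Filter.Tendsto.eventually_lt_const hFM tendsto_id)]
      with n h2 h3
    by_contra hc
    push_neg at hc
    have hbM : b n ≤ M' := le_trans hc.le (le_max_left M x₀)
    have h5 := hmono hbM
    simp only [id_eq] at h3
    linarith [h2, h3, h5]
  refine ⟨a, b, hapos, fun x _ => ?_⟩
  -- Step A : log-tail difference tends to x
  have stepA := (vonMises_key F f i' hxp x₀ hderiv hfpos hideriv hlim x).comp hbtop
  have stepA' : Tendsto
      (fun n => -Real.log (1 - F (a n * x + b n)) + Real.log (1 - F (b n)))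
      atTop (𝓝 x) := by
    refine stepA.congr fun n => ?_
    simp only [Function.comp_apply, hadef]
    rw [add_comm (b n)]
  -- Step B : tail ratio tends to exp (-x)
  have stepB : Tendsto (fun n => (1 - F (a n * x + b n)) / (1 - F (b n)))
      atTop (𝓝 (Real.exp (-x))) := by
    have h1 := (Real.continuous_exp.tendsto (-x)).comp stepA'.neg
    refine h1.congr fun n => ?_
    simp only [Function.comp_apply, neg_add, neg_neg]
    rw [← sub_eq_add_neg, Real.exp_sub, Real.exp_log (hFb _), Real.exp_log (hFb _)]
  -- Step C : n * tail tends to exp (-x)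
  have stepC : Tendsto (fun n : ℕ => (n:ℝ) * (1 - F (a n * x + b n)))
      atTop (𝓝 (Real.exp (-x))) := by
    refine stepB.congr' ?_
    filter_upwards [hbval, eventually_ge_atTop 1] with n h1 h2
    have hn : (n:ℝ) ≠ 0 := by positivity
    rw [h1]
    field_simp
  -- Step D : tail tends to 0
  have stepD : Tendsto (fun n : ℕ => 1 - F (a n * x + b n)) atTop (𝓝 0) := by
    have h1 : Tendsto (fun n : ℕ => ((n:ℝ) * (1 - F (a n * x + b n))) * (1/(n:ℝ)))
        atTop (𝓝 (Real.exp (-x) * 0)) :=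
      stepC.mul tendsto_one_div_atTop_nhds_zero_nat
    rw [mul_zero] at h1
    refine h1.congr' ?_
    filter_upwards [eventually_ge_atTop 1] with n h2
    have hn : (n:ℝ) ≠ 0 := by positivity
    field_simp
  -- Step F : log slope composition
  have stepF : Tendsto
      (fun n : ℕ => Real.log (1 - (1 - F (a n * x + b n))) / (1 - F (a n * x + b n)))
      atTop (𝓝 (-1)) := by
    refine log_one_sub_slope.comp ?_
    rw [tendsto_nhdsWithin_iff]
    exact ⟨stepD, Eventually.of_forall fun n => (hFb _).ne'⟩
  -- Step G : n * log F tends to -exp(-x)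
  have stepG : Tendsto (fun n : ℕ => (n:ℝ) * Real.log (F (a n * x + b n)))
      atTop (𝓝 (-Real.exp (-x))) := by
    have h1 := stepC.mul stepF
    rw [mul_neg_one] at h1
    refine h1.congr fun n => ?_
    have ht : (1 - F (a n * x + b n)) ≠ 0 := (hFb _).ne'
    rw [show (1 : ℝ) - (1 - F (a n * x + b n)) = F (a n * x + b n) by ring]
    field_simp
  -- Conclusion
  have stepH := (Real.continuous_exp.tendsto _).comp stepG
  refine stepH.congr' ?_
  filter_upwards [stepD.eventually (Filter.Tendsto.eventually_lt_const (by norm_num : (0:ℝ) < 1) tendsto_id)]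
    with n hn
  have hn' : 1 - F (a n * x + b n) < 1 := hn
  have hFpos : 0 < F (a n * x + b n) := by linarith
  simp only [Function.comp_apply]
  rw [Real.exp_nat_mul, Real.exp_log hFpos]
end

section
/- If a : ℝ → (0,∞) is differentiable and a′(t) → 0 as t → ∞, then a is self-neglecting: a(t + x a(t))/a(t) → 1 as t → ∞ uniformly in x on compact subsets of ℝ. -/
open Filter Topology

/-- If `a : ℝ → (0,∞)` is differentiable with `a'(t) → 0` as `t → ∞`, then `a`
is self-neglecting. -/
theorem selfNeglecting_of_deriv_tendsto_zero (a : ℝ → ℝ)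
    (hpos : ∀ t, 0 < a t) (hdiff : Differentiable ℝ a)
    (hderiv : Tendsto (deriv a) atTop (𝓝 0)) :
    SelfNeglecting a := by
  refine ⟨hpos, fun K hK => ?_⟩
  rw [Metric.tendstoUniformlyOn_iff]
  intro ε hε
  obtain ⟨M₀, hM₀⟩ := hK.isBounded.exists_norm_le
  set M : ℝ := max M₀ 0 with hMdef
  have hM0 : 0 ≤ M := le_max_right _ _
  have hMK : ∀ x ∈ K, |x| ≤ M := fun x hx =>
    le_trans (by simpa using hM₀ x hx) (le_max_left _ _)
  set δ : ℝ := min (ε / (2 * (M + 1))) (1 / (2 * (M + 1))) with hδdef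
  have hden : 0 < 2 * (M + 1) := by linarith
  have hδpos : 0 < δ := lt_min (by positivity) (by positivity)
  have hδ1 : δ ≤ ε / (2 * (M + 1)) := min_le_left _ _
  have hδ2 : δ ≤ 1 / (2 * (M + 1)) := min_le_right _ _
  have hδM1 : δ * M ≤ 1 / 2 := by
    have h1 : δ * M ≤ (1 / (2 * (M + 1))) * M := by
      apply mul_le_mul_of_nonneg_right hδ2 hM0
    have h2 : (1 / (2 * (M + 1))) * M ≤ 1 / 2 := by
      rw [div_mul_eq_mul_div, div_le_div_iff₀ hden (by norm_num)]
      nlinarith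
    linarith
  have hδMε : δ * M ≤ ε / 2 := by
    have h1 : δ * M ≤ (ε / (2 * (M + 1))) * M := by
      apply mul_le_mul_of_nonneg_right hδ1 hM0
    have h2 : (ε / (2 * (M + 1))) * M ≤ ε / 2 := by
      rw [div_mul_eq_mul_div, div_le_div_iff₀ hden (by norm_num)]
      nlinarith
    linarith
  obtain ⟨T, hT⟩ := (eventually_atTop).mp
    ((Metric.tendsto_nhds.mp hderiv) δ hδpos)
  have hTb : ∀ s ∈ Set.Ici T, ‖deriv a s‖ ≤ δ := by
    intro s hs
    have := hT s hs
    rw [Real.dist_eq, sub_zero] at this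
    simpa [Real.norm_eq_abs] using this.le
  have key : ∀ u ∈ Set.Ici T, ∀ v ∈ Set.Ici T, |a v - a u| ≤ δ * |v - u| := by
    intro u hu v hv
    have := (convex_Ici T).norm_image_sub_le_of_norm_deriv_le
      (f := a) (fun x _ => hdiff x) hTb hu hv
    simpa [Real.norm_eq_abs] using this
  filter_upwards [eventually_ge_atTop (T + 2 * M * a T)] with t ht
  intro x hx
  have hxM : |x| ≤ M := hMK x hx
  have htT : T ≤ t := by nlinarith [hpos T]
  have hat : a t ≤ a T + δ * (t - T) := by
    have h := key T Set.self_mem_Ici t htT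
    rw [abs_of_nonneg (by linarith : (0:ℝ) ≤ t - T)] at h
    have h2 := abs_le.mp h
    linarith [h2.1, h2.2]
  have hatpos := hpos t
  set u : ℝ := t + x * a t with hu
  have huT : T ≤ u := by
    have h1 : -(M * a t) ≤ x * a t := by
      have : -M ≤ x := neg_le_of_abs_le hxM
      nlinarith
    have h2 : M * a t ≤ M * a T + (1 / 2) * (t - T) := by
      have := mul_le_mul_of_nonneg_left hat hM0
      nlinarith
    nlinarith
  have hkey := key t (Set.mem_Ici.mpr htT) u (Set.mem_Ici.mpr huT)
  have hut : |u - t| = |x| * a t := by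
    rw [hu]
    rw [show t + x * a t - t = x * a t by ring, abs_mul, abs_of_pos hatpos]
  rw [hut] at hkey
  have hbound : |a u - a t| ≤ (ε / 2) * a t := by
    calc |a u - a t| ≤ δ * (|x| * a t) := hkey
      _ ≤ δ * (M * a t) := by
          apply mul_le_mul_of_nonneg_left _ hδpos.le
          exact mul_le_mul_of_nonneg_right hxM hatpos.le
      _ = (δ * M) * a t := by ring
      _ ≤ (ε / 2) * a t := mul_le_mul_of_nonneg_right hδMε hatpos.le
  rw [Real.dist_eq]
  have : (1 : ℝ) - a u / a t = (a t - a u) / a t := by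
    field_simp
  rw [this, abs_div, abs_of_pos hatpos, abs_sub_comm]
  rw [div_lt_iff₀ hatpos]
  nlinarith
end

section
/- Representation theorem for self-neglecting functions: A continuous function a : ℝ → (0,∞) is self-neglecting if and only if there exist a constant c > 0, a continuously differentiable function e : ℝ → ℝ with e(u) → 0 as u → ∞, and a function h : ℝ → ℝ with h(x) → 1 as x → ∞, such that a(x) = c · h(x) · ∫_0^x e(u) du for all sufficiently large x. -/
open Filter Topology

section Helpers
open intervalIntegral Real MeasureTheory


noncomputable def prim (f : ℝ → ℝ) : ℝ → ℝ := fun y => ∫ t in (0:ℝ)..y, f t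

lemma prim_hasDerivAt {f : ℝ → ℝ} (hf : Continuous f) (x : ℝ) :
    HasDerivAt (prim f) (f x) x :=
  intervalIntegral.integral_hasDerivAt_right (hf.intervalIntegrable 0 x)
    (hf.stronglyMeasurableAtFilter _ _) hf.continuousAt

lemma prim_sub {f : ℝ → ℝ} (hf : Continuous f) (s t : ℝ) :
    prim f t - prim f s = ∫ r in s..t, f r := by
  simp only [prim]
  have := intervalIntegral.integral_add_adjacent_intervals
    (hf.intervalIntegrable 0 s : IntervalIntegrable f volume 0 s)
    (hf.intervalIntegrable s t : IntervalIntegrable f volume s t)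
  linarith

noncomputable def tch (p : ℝ → ℝ) : ℝ → ℝ := prim (fun t => (p t)⁻¹)

lemma tch_hasDerivAt {p : ℝ → ℝ} (hp : Continuous p) (hpos : ∀ x, 0 < p x) (x : ℝ) :
    HasDerivAt (tch p) (p x)⁻¹ x :=
  prim_hasDerivAt (hp.inv₀ (fun t => (hpos t).ne')) x

lemma tch_strictMono {p : ℝ → ℝ} (hp : Continuous p) (hpos : ∀ x, 0 < p x) :
    StrictMono (tch p) := by
  apply strictMono_of_deriv_pos
  intro x
  rw [(tch_hasDerivAt hp hpos x).deriv]
  exact inv_pos.2 (hpos x)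

lemma tch_continuous {p : ℝ → ℝ} (hp : Continuous p) (hpos : ∀ x, 0 < p x) :
    Continuous (tch p) :=
  Differentiable.continuous (fun x => (tch_hasDerivAt hp hpos x).differentiableAt)

lemma tch_sub {p : ℝ → ℝ} (hp : Continuous p) (hpos : ∀ x, 0 < p x) (s t : ℝ) :
    tch p t - tch p s = ∫ r in s..t, (p r)⁻¹ :=
  prim_sub (hp.inv₀ (fun t => (hpos t).ne')) s t

noncomputable def mavg (g : ℝ → ℝ) : ℝ → ℝ := fun s => ∫ r in s..(s+1), g r

lemma mavg_eq {g : ℝ → ℝ} (hg : Continuous g) (s : ℝ) :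
    mavg g s = prim g (s+1) - prim g s := by
  have h1 : IntervalIntegrable g volume 0 s := hg.intervalIntegrable _ _
  have h2 : IntervalIntegrable g volume s (s+1) := hg.intervalIntegrable _ _
  have := intervalIntegral.integral_add_adjacent_intervals h1 h2
  simp only [prim, mavg]
  linarith [this]

lemma mavg_hasDerivAt {g : ℝ → ℝ} (hg : Continuous g) (s : ℝ) :
    HasDerivAt (mavg g) (g (s+1) - g s) s := by
  have : HasDerivAt (fun s => prim g (s+1) - prim g s) (g (s+1) * 1 - g s) s := by
    have h1 : HasDerivAt (fun s : ℝ => prim g (s+1)) (g (s+1) * 1) s :=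
      by
        have := (prim_hasDerivAt hg (s+1)).comp s ((hasDerivAt_id' s).add_const 1)
        exact this
    exact h1.sub (prim_hasDerivAt hg s)
  rw [mul_one] at this
  exact this.congr_of_eventuallyEq (Filter.Eventually.of_forall fun r => (mavg_eq hg r))

lemma mavg_continuous {g : ℝ → ℝ} (hg : Continuous g) : Continuous (mavg g) :=
  Differentiable.continuous (fun s => (mavg_hasDerivAt hg s).differentiableAt)

lemma mavg_sub_le {g : ℝ → ℝ} (hg : Continuous g) {s c ε : ℝ}
    (h : ∀ r ∈ Set.Icc s (s+1), |g r - c| ≤ ε) : |mavg g s - c| ≤ ε := by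
  have : mavg g s - c = ∫ r in s..(s+1), (g r - c) := by
    simp [mavg, intervalIntegral.integral_sub (hg.intervalIntegrable _ _)
      (intervalIntegrable_const), ]
  rw [this]
  have hb : ∀ r ∈ Set.uIoc s (s+1), ‖g r - c‖ ≤ ε := by
    intro r hr
    rw [Set.uIoc_of_le (by linarith)] at hr
    exact h r ⟨le_of_lt hr.1, hr.2⟩
  calc |∫ r in s..(s+1), (g r - c)| ≤ ε * |s + 1 - s| :=
        intervalIntegral.norm_integral_le_of_norm_le_const hb
    _ = ε := by simp

lemma exists_inverse {τ : ℝ → ℝ} (hc : Continuous τ) (hsm : StrictMono τ)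
    (hTop : Tendsto τ atTop atTop) (hBot : Tendsto τ atBot atBot) :
    ∃ σ : ℝ → ℝ, Continuous σ ∧ Monotone σ ∧ (∀ s, τ (σ s) = s) ∧ (∀ x, σ (τ x) = x) ∧
      Tendsto σ atTop atTop := by
  have hsurj : Function.Surjective τ := hc.surjective hTop hBot
  let E : ℝ ≃o ℝ := hsm.orderIsoOfSurjective τ hsurj
  refine ⟨E.symm, E.symm.continuous, E.symm.monotone, fun s => ?_, fun x => ?_, ?_⟩
  · exact E.apply_symm_apply s
  · exact E.symm_apply_apply x
  · refine tendsto_atTop_atTop.2 fun b => ⟨τ b, fun a ha => ?_⟩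
    have := E.symm.monotone ha
    have hb : E.symm (τ b) = b := E.symm_apply_eq.2 rfl
    rwa [hb] at this


lemma sn_flat {a : ℝ → ℝ} (hSN : SelfNeglecting a) {δ : ℝ} (hδ : 0 < δ) :
    ∀ᶠ t in atTop, ∀ y ∈ Set.Icc t (t + 3 * a t), |a y - a t| ≤ δ * a t := by
  have hpos := hSN.1
  have hU := hSN.2 (Set.Icc 0 3) isCompact_Icc
  have hev := Metric.tendstoUniformlyOn_iff.1 hU δ hδ
  filter_upwards [hev] with t ht y hy
  have hat := hpos t
  have hxmem : (y - t) / a t ∈ Set.Icc (0:ℝ) 3 :=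
    ⟨div_nonneg (by linarith [hy.1]) hat.le,
     by rw [div_le_iff₀ hat]; linarith [hy.2]⟩
  have h1 := ht ((y - t) / a t) hxmem
  rw [(by field_simp; ring : t + (y - t) / a t * a t = y), Real.dist_eq] at h1
  have h2 : |a y - a t| / a t < δ := by
    rwa [abs_sub_comm,
      (by rw [sub_div, div_self hat.ne'] : a y / a t - 1 = (a y - a t) / a t),
      abs_div, abs_of_pos hat] at h1
  rw [div_lt_iff₀ hat] at h2
  exact h2.le

section Forward
variable {a : ℝ → ℝ}

lemma tch_b_atTop (hpos : ∀ t, 0 < a t) (hcont : Continuous a)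
    (hSN : SelfNeglecting a) :
    Tendsto (tch (fun x => a (max x 0))) atTop atTop := by
  set b : ℝ → ℝ := fun x => a (max x 0) with hbdef
  have hb : Continuous b := hcont.comp (continuous_id.max continuous_const)
  have hbpos : ∀ x, 0 < b x := fun x => hpos _
  obtain ⟨T₀, hT₀⟩ := (sn_flat hSN one_pos).exists_forall_of_atTop
  set T : ℝ := max T₀ 1 with hTdef
  -- the recursive sequence
  set u : ℕ → ℝ := fun n => Nat.rec T (fun _ s => s + a s) n with hu
  have hu0 : u 0 = T := rfl
  have husucc : ∀ n, u (n+1) = u n + a (u n) := fun n => rfl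
  have hTu : ∀ n, T ≤ u n := by
    intro n
    induction n with
    | zero => exact le_refl T
    | succ n ih => rw [husucc]; linarith [hpos (u n)]
  have hstep : ∀ n, tch b (u n) + 1/2 ≤ tch b (u (n+1)) := by
    intro n
    set t := u n with htdef
    have htT : T ≤ t := hTu n
    have ht1 : (1:ℝ) ≤ t := le_trans (le_max_right T₀ 1) htT
    have htT₀ : T₀ ≤ t := le_trans (le_max_left T₀ 1) htT
    have hflat := hT₀ t htT₀
    have hbound : ∀ y ∈ Set.Icc t (t + a t), (2 * a t)⁻¹ ≤ (b y)⁻¹ := by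
      intro y hy
      have hymem : y ∈ Set.Icc t (t + 3 * a t) := ⟨hy.1, by linarith [hy.2, hpos t]⟩
      have := hflat y hymem
      have hay : a y ≤ 2 * a t := by
        have := abs_le.1 this
        linarith [this.2]
      have hby : b y = a y := by
        show a (max y 0) = a y
        rw [max_eq_left (by linarith [hy.1, ht1] : (0:ℝ) ≤ y)]
      rw [hby]
      exact inv_anti₀ (hpos y) hay
    have hint : tch b (u (n+1)) - tch b t = ∫ y in t..(t + a t), (b y)⁻¹ := by
      rw [husucc]; exact tch_sub hb hbpos t (t + a t)
    have hmono : (∫ y in t..(t + a t), (2 * a t)⁻¹) ≤ ∫ y in t..(t + a t), (b y)⁻¹ := by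
      apply intervalIntegral.integral_mono_on (by linarith [hpos t])
        intervalIntegrable_const ((hb.inv₀ fun x => (hbpos x).ne').intervalIntegrable _ _)
      exact hbound
    have hconst : (∫ y in t..(t + a t), (2 * a t)⁻¹) = 1/2 := by
      rw [intervalIntegral.integral_const, smul_eq_mul, add_sub_cancel_left]
      rw [mul_inv, ← mul_assoc, mul_comm (a t), mul_assoc,
        mul_inv_cancel₀ (hpos t).ne']
      norm_num
    linarith [hmono, hconst ▸ hmono, hint]
  have hlower : ∀ n, tch b T + n * (1/2) ≤ tch b (u n) := by
    intro n
    induction n with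
    | zero => simp [hu0]
    | succ n ih =>
        have := hstep n
        push_cast
        linarith
  apply tendsto_atTop_atTop.2
  intro C
  obtain ⟨n, hn⟩ := exists_nat_ge ((C - tch b T) * 2)
  refine ⟨u n, fun x hx => ?_⟩
  have h1 : tch b (u n) ≤ tch b x := (tch_strictMono hb hbpos).monotone hx
  have h2 := hlower n
  linarith

lemma tch_b_atBot (hpos : ∀ t, 0 < a t) (hcont : Continuous a) :
    Tendsto (tch (fun x => a (max x 0))) atBot atBot := by
  set b : ℝ → ℝ := fun x => a (max x 0) with hbdef
  have hb : Continuous b := hcont.comp (continuous_id.max continuous_const)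
  have hbpos : ∀ x, 0 < b x := fun x => hpos _
  have heq : ∀ x ≤ (0:ℝ), tch b x = x * (a 0)⁻¹ := by
    intro x hx
    have : tch b x = ∫ t in (0:ℝ)..x, (a 0)⁻¹ := by
      apply intervalIntegral.integral_congr
      intro t ht
      rw [Set.uIcc_of_ge hx] at ht
      have : max t 0 = 0 := max_eq_right ht.2
      simp only [hbdef, this]
    rw [this, intervalIntegral.integral_const, smul_eq_mul, sub_zero]
  have hlin : Tendsto (fun x : ℝ => x * (a 0)⁻¹) atBot atBot :=
    Tendsto.atBot_mul_const (inv_pos.2 (hpos 0)) tendsto_id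
  apply hlin.congr'
  filter_upwards [eventually_le_atBot (0:ℝ)] with x hx
  exact (heq x hx).symm

end Forward

section Forward2
variable {a : ℝ → ℝ}

lemma stage1_flat (hpos : ∀ t, 0 < a t) (hcont : Continuous a) (hSN : SelfNeglecting a)
    {σ : ℝ → ℝ} (hσmono : Monotone σ)
    (hτσ : ∀ s, tch (fun x => a (max x 0)) (σ s) = s)
    (hστ : ∀ x, σ (tch (fun x => a (max x 0)) x) = x)
    {ε : ℝ} (hε : 0 < ε) :
    ∀ᶠ s in atTop, ∀ u ∈ Set.Icc (0:ℝ) 2,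
      |Real.log (a (max (σ (s+u)) 0)) - Real.log (a (max (σ s) 0))| ≤ ε := by
  set b : ℝ → ℝ := fun x => a (max x 0) with hbdef
  have hb : Continuous b := hcont.comp (continuous_id.max continuous_const)
  have hbpos : ∀ x, 0 < b x := fun x => hpos _
  have hsm := tch_strictMono hb hbpos
  obtain ⟨δ, hδpos, hδhalf, hδ1, hδ2⟩ :
      ∃ δ : ℝ, 0 < δ ∧ δ ≤ 1/2 ∧ Real.exp (-ε) ≤ 1 - δ ∧ 1 + δ ≤ Real.exp ε := by
    refine ⟨min (1/2) (1 - Real.exp (-ε)), ?_, min_le_left _ _, ?_, ?_⟩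
    · apply lt_min (by norm_num)
      have : Real.exp (-ε) < 1 := Real.exp_lt_one_iff.2 (by linarith)
      linarith
    · have := min_le_right (1/2 : ℝ) (1 - Real.exp (-ε))
      linarith
    · have h1 := min_le_right (1/2 : ℝ) (1 - Real.exp (-ε))
      have h2 : Real.exp (-ε) = (Real.exp ε)⁻¹ := Real.exp_neg ε
      have h3 := Real.exp_pos ε
      rw [h2] at h1 ⊢
      nlinarith [sq_nonneg (Real.exp ε - 1), mul_inv_cancel₀ h3.ne']
  obtain ⟨T₀, hT₀⟩ := (sn_flat hSN hδpos).exists_forall_of_atTop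
  set T : ℝ := max T₀ 1 with hTdef
  filter_upwards [eventually_ge_atTop (tch b T)] with s hs u hu
  set t := σ s with htdef
  have htT : T ≤ t := by
    have : tch b T ≤ tch b t := by rw [hτσ]; exact hs
    exact (hsm.le_iff_le).1 this
  have ht1 : (1:ℝ) ≤ t := le_trans (le_max_right T₀ 1) htT
  have hflat := hT₀ t (le_trans (le_max_left T₀ 1) htT)
  have hwin : ∀ y ∈ Set.Icc t (t + 3 * a t),
      (1 - δ) * a t ≤ a y ∧ a y ≤ (1 + δ) * a t := by
    intro y hy
    have := abs_le.1 (hflat y hy)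
    constructor <;> linarith [this.1, this.2]
  have hbeq : ∀ y : ℝ, 0 ≤ y → b y = a y := by
    intro y hy
    show a (max y 0) = a y
    rw [max_eq_left hy]
  -- the window covers σ (s+u)
  have hB : s + 2 ≤ tch b (t + 3 * a t) := by
    have hsub : tch b (t + 3 * a t) - tch b t = ∫ y in t..(t + 3 * a t), (b y)⁻¹ :=
      tch_sub hb hbpos t (t + 3 * a t)
    have hmono : (∫ y in t..(t + 3 * a t), ((1 + δ) * a t)⁻¹)
        ≤ ∫ y in t..(t + 3 * a t), (b y)⁻¹ := by
      apply intervalIntegral.integral_mono_on (by linarith [hpos t])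
        intervalIntegrable_const ((hb.inv₀ fun x => (hbpos x).ne').intervalIntegrable _ _)
      intro y hy
      simp only [Pi.inv_apply]
      rw [hbeq y (by linarith [hy.1])]
      exact inv_anti₀ (hpos y) (hwin y hy).2
    have hconst : (∫ y in t..(t + 3 * a t), ((1 + δ) * a t)⁻¹)
        = 3 * ((1 + δ))⁻¹ := by
      rw [intervalIntegral.integral_const, smul_eq_mul,
        (by ring : t + 3 * a t - t = 3 * a t), mul_inv,
        (by ring : 3 * a t * ((1 + δ)⁻¹ * (a t)⁻¹) = 3 * (1 + δ)⁻¹ * (a t * (a t)⁻¹)),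
        mul_inv_cancel₀ (hpos t).ne', mul_one]
    have h32 : (2:ℝ) ≤ 3 * ((1 + δ))⁻¹ := by
      rw [(by rw [div_eq_mul_inv] : (3:ℝ)/(1+δ) = 3 * (1+δ)⁻¹).symm,
        le_div_iff₀ (by linarith : (0:ℝ) < 1 + δ)]
      linarith
    have hts : tch b t = s := hτσ s
    linarith [hsub ▸ hmono, hconst ▸ hmono]
  have hy1 : t ≤ σ (s + u) := hσmono (by linarith [hu.1] : s ≤ s + u)
  have hy2 : σ (s + u) ≤ t + 3 * a t := by
    have h1 : s + u ≤ tch b (t + 3 * a t) := by linarith [hu.2, hB]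
    have := hσmono h1
    rwa [hστ] at this
  set y := σ (s + u) with hydef
  have hymem : y ∈ Set.Icc t (t + 3 * a t) := ⟨hy1, hy2⟩
  obtain ⟨hw1, hw2⟩ := hwin y hymem
  have hy0 : (0:ℝ) ≤ y := by linarith
  have ht0 : (0:ℝ) ≤ t := by linarith
  rw [hbdef] at *
  rw [max_eq_left hy0, max_eq_left ht0]
  have hexp1 : a y ≤ Real.exp ε * a t := by nlinarith [hpos t]
  have hexp2 : Real.exp (-ε) * a t ≤ a y := by nlinarith [hpos t]
  have hlog : Real.log (a y) - Real.log (a t) = Real.log (a y / a t) :=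
    (Real.log_div (hpos y).ne' (hpos t).ne').symm
  rw [hlog]
  have hypos := hpos y
  have htpos := hpos t
  have hr : 0 < a y / a t := div_pos hypos htpos
  apply abs_le.2
  constructor
  · rw [← Real.log_exp (-ε)]
    apply Real.log_le_log (Real.exp_pos _)
    rw [le_div_iff₀ htpos]
    linarith
  · rw [← Real.log_exp ε]
    apply Real.log_le_log hr
    rw [div_le_iff₀ htpos]
    linarith

end Forward2

section Main
variable {a : ℝ → ℝ}

lemma forward (hpos : ∀ t, 0 < a t) (hcont : Continuous a) (hSN : SelfNeglecting a) :
    ∃ c : ℝ, 0 < c ∧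
      ∃ e : ℝ → ℝ, ContDiff ℝ 1 e ∧ Tendsto e atTop (𝓝 0) ∧
        ∃ h : ℝ → ℝ, Tendsto h atTop (𝓝 1) ∧
          ∀ᶠ x in atTop, a x = c * h x * ∫ u in (0:ℝ)..x, e u := by
  classical
  set b : ℝ → ℝ := fun x => a (max x 0) with hbdef
  have hb : Continuous b := hcont.comp (continuous_id.max continuous_const)
  have hbpos : ∀ x, 0 < b x := fun x => hpos _
  have hτsm : StrictMono (tch b) := tch_strictMono hb hbpos
  have hτc : Continuous (tch b) := tch_continuous hb hbpos
  have hτTop : Tendsto (tch b) atTop atTop := tch_b_atTop hpos hcont hSN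
  have hτBot : Tendsto (tch b) atBot atBot := tch_b_atBot hpos hcont
  obtain ⟨σ, hσc, hσmono, hτσ, hστ, hσTop⟩ := exists_inverse hτc hτsm hτTop hτBot
  set g : ℝ → ℝ := fun s => Real.log (b (σ s)) with hgdef
  have hgc : Continuous g := (hb.comp hσc).log fun s => (hbpos _).ne'
  have flat1 : ∀ ε > (0:ℝ), ∀ᶠ s in atTop, ∀ u ∈ Set.Icc (0:ℝ) 2,
      |g (s+u) - g s| ≤ ε := fun ε hε =>
    stage1_flat hpos hcont hSN hσmono hτσ hστ hε
  set G : ℝ → ℝ := mavg g with hGdef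
  have hGc : Continuous G := mavg_continuous hgc
  -- limits for G
  have hGg : Tendsto (fun s => G s - g s) atTop (𝓝 0) := by
    rw [Metric.tendsto_nhds]
    intro ε hε
    filter_upwards [flat1 (ε/2) (by linarith)] with s hflat
    rw [Real.dist_eq, sub_zero]
    have hb1 : |G s - g s| ≤ ε/2 := by
      apply mavg_sub_le hgc
      intro r hr
      have := hflat (r - s) ⟨by linarith [hr.1], by linarith [hr.2]⟩
      rwa [(by ring : s + (r - s) = r)] at this
    linarith
  have hD1 : Tendsto (fun s => g (s+1) - g s) atTop (𝓝 0) := by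
    rw [Metric.tendsto_nhds]
    intro ε hε
    filter_upwards [flat1 (ε/2) (by linarith)] with s hflat
    rw [Real.dist_eq, sub_zero]
    have := hflat 1 (by norm_num)
    linarith [abs_nonneg (g (s+1) - g s), this]
  -- stage-1 smooth function
  set Φ₁ : ℝ → ℝ := fun x => Real.exp (G (tch b x)) with hΦ₁def
  set η : ℝ → ℝ := fun x =>
    Real.exp (G (tch b x) - g (tch b x)) * (g (tch b x + 1) - g (tch b x)) with hηdef
  have hgτ : ∀ x, g (tch b x) = Real.log (b x) := by
    intro x
    show Real.log (b (σ (tch b x))) = Real.log (b x)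
    rw [hστ]
  have hΦ₁der : ∀ x, HasDerivAt Φ₁ (η x) x := by
    intro x
    have h1 : HasDerivAt (fun y => G (tch b y))
        ((g (tch b x + 1) - g (tch b x)) * (b x)⁻¹) x :=
      (mavg_hasDerivAt hgc (tch b x)).comp x (tch_hasDerivAt hb hbpos x)
    have h2 := (Real.hasDerivAt_exp (G (tch b x))).comp x h1
    refine HasDerivAt.congr_deriv h2 ?_
    rw [hηdef]
    simp only []
    rw [Real.exp_sub, hgτ, Real.exp_log (hbpos x)]
    ring
  have hΦ₁pos : ∀ x, 0 < Φ₁ x := fun x => Real.exp_pos _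
  have hΦ₁c : Continuous Φ₁ :=
    Differentiable.continuous fun x => (hΦ₁der x).differentiableAt
  have hηc : Continuous η := by
    apply Continuous.mul
    · exact Real.continuous_exp.comp ((hGc.comp hτc).sub (hgc.comp hτc))
    · exact (hgc.comp (hτc.add continuous_const)).sub (hgc.comp hτc)
  have hΦ₁CD : ContDiff ℝ 1 Φ₁ := by
    rw [contDiff_one_iff_deriv]
    refine ⟨fun x => (hΦ₁der x).differentiableAt, ?_⟩
    have : deriv Φ₁ = η := funext fun x => (hΦ₁der x).deriv
    rw [this]; exact hηc
  have hGgτ : Tendsto (fun x => G (tch b x) - g (tch b x)) atTop (𝓝 0) :=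
    hGg.comp hτTop
  have hη0 : Tendsto η atTop (𝓝 0) := by
    have h1 : Tendsto (fun x => Real.exp (G (tch b x) - g (tch b x))) atTop (𝓝 1) := by
      have := (Real.continuous_exp.tendsto 0).comp hGgτ
      rwa [Real.exp_zero] at this
    have h2 : Tendsto (fun x => g (tch b x + 1) - g (tch b x)) atTop (𝓝 0) :=
      hD1.comp hτTop
    have := h1.mul h2
    rwa [mul_zero] at this
  have hΦ₁b : Tendsto (fun x => Φ₁ x / b x) atTop (𝓝 1) := by
    have h1 : ∀ x, Φ₁ x / b x = Real.exp (G (tch b x) - g (tch b x)) := by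
      intro x
      rw [Real.exp_sub, hgτ, Real.exp_log (hbpos x)]
    have := (Real.continuous_exp.tendsto 0).comp hGgτ
    rw [Real.exp_zero] at this
    exact this.congr fun x => (h1 x).symm
  -- stage 2 time change
  set τ₁ : ℝ → ℝ := tch Φ₁ with hτ₁def
  have hτ₁sm : StrictMono τ₁ := tch_strictMono hΦ₁c hΦ₁pos
  have hτ₁c : Continuous τ₁ := tch_continuous hΦ₁c hΦ₁pos
  have hτ₁Top : Tendsto τ₁ atTop atTop := by
    obtain ⟨X₀, hX₀⟩ := ((hΦ₁b.eventually (eventually_le_nhds (by norm_num : (1:ℝ) < 2)))).exists_forall_of_atTop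
    have key : ∀ x ≥ X₀, τ₁ X₀ + (1/2) * (tch b x - tch b X₀) ≤ τ₁ x := by
      intro x hx
      have hsub : τ₁ x - τ₁ X₀ = ∫ y in X₀..x, (Φ₁ y)⁻¹ := tch_sub hΦ₁c hΦ₁pos X₀ x
      have hmono : (∫ y in X₀..x, (1/2) * (b y)⁻¹) ≤ ∫ y in X₀..x, (Φ₁ y)⁻¹ := by
        apply intervalIntegral.integral_mono_on hx
          ((continuous_const.mul (hb.inv₀ fun z => (hbpos z).ne')).intervalIntegrable _ _)
          ((hΦ₁c.inv₀ fun z => (hΦ₁pos z).ne').intervalIntegrable _ _)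
        intro y hy
        have h2 : Φ₁ y ≤ 2 * b y := by
          have := hX₀ y hy.1
          rw [div_le_iff₀ (hbpos y)] at this
          linarith
        calc (1/2) * (b y)⁻¹ = (2 * b y)⁻¹ := by rw [mul_inv]; ring
          _ ≤ (Φ₁ y)⁻¹ := inv_anti₀ (hΦ₁pos y) h2
      have hval : (∫ y in X₀..x, (1/2) * (b y)⁻¹) = (1/2) * (tch b x - tch b X₀) := by
        rw [intervalIntegral.integral_const_mul, ← tch_sub hb hbpos]
      linarith [hval ▸ hmono, hsub ▸ hmono]
    have htend : Tendsto (fun x => τ₁ X₀ + (1/2) * (tch b x - tch b X₀)) atTop atTop := by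
      apply tendsto_atTop_add_const_left
      apply Tendsto.const_mul_atTop (by norm_num : (0:ℝ) < 1/2)
      exact tendsto_atTop_add_const_right _ _ hτTop
    apply tendsto_atTop_mono' atTop ?_ htend
    filter_upwards [eventually_ge_atTop X₀] with x hx
    exact key x hx
  have hσ0 : σ 0 = 0 := by
    have h0 : tch b 0 = 0 := intervalIntegral.integral_same
    conv_lhs => rw [← h0]
    exact hστ 0
  have hglog : ∀ r ≤ (0:ℝ), g r = Real.log (a 0) := by
    intro r hr
    have hσr : σ r ≤ 0 := by
      rw [← hσ0]
      exact hσmono hr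
    show Real.log (b (σ r)) = Real.log (a 0)
    rw [hbdef]
    simp only []
    rw [max_eq_right hσr]
  have hΦ₁const : ∀ x, tch b x ≤ -1 → Φ₁ x = a 0 := by
    intro x hx
    have hG : G (tch b x) = Real.log (a 0) := by
      rw [hGdef]
      show (∫ r in (tch b x)..(tch b x + 1), g r) = Real.log (a 0)
      rw [intervalIntegral.integral_congr (g := fun _ => Real.log (a 0)) ?_,
        intervalIntegral.integral_const, smul_eq_mul]
      · ring
      · intro r hr
        rw [Set.uIcc_of_le (by linarith)] at hr
        exact hglog r (by linarith [hr.2])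
    show Real.exp (G (tch b x)) = a 0
    rw [hG, Real.exp_log (hpos 0)]
  have hτ₁Bot : Tendsto τ₁ atBot atBot := by
    set cm : ℝ := σ (-1) with hcm
    have hτcm : tch b cm = -1 := hτσ (-1)
    have hconst : ∀ x ≤ cm, Φ₁ x = a 0 := by
      intro x hx
      apply hΦ₁const
      calc tch b x ≤ tch b cm := hτsm.monotone hx
        _ = -1 := hτcm
    have heq : ∀ x ≤ cm, τ₁ x = τ₁ cm + (x - cm) * (a 0)⁻¹ := by
      intro x hx
      have hsub : τ₁ x - τ₁ cm = ∫ y in cm..x, (Φ₁ y)⁻¹ := tch_sub hΦ₁c hΦ₁pos cm x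
      have : (∫ y in cm..x, (Φ₁ y)⁻¹) = ∫ y in cm..x, (a 0)⁻¹ := by
        apply intervalIntegral.integral_congr
        intro y hy
        rw [Set.uIcc_of_ge hx] at hy
        show (Φ₁ y)⁻¹ = (a 0)⁻¹
        rw [hconst y hy.2]
      rw [this, intervalIntegral.integral_const, smul_eq_mul] at hsub
      linarith
    have hlin : Tendsto (fun x => τ₁ cm + (x - cm) * (a 0)⁻¹) atBot atBot := by
      apply tendsto_atBot_add_const_left
      apply Tendsto.atBot_mul_const (inv_pos.2 (hpos 0))
      exact tendsto_atBot_add_const_right _ _ tendsto_id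
    apply hlin.congr'
    filter_upwards [eventually_le_atBot cm] with x hx
    exact (heq x hx).symm
  obtain ⟨σ₁, hσ₁c, hσ₁mono, hτ₁σ₁, hσ₁τ₁, hσ₁Top⟩ :=
    exists_inverse hτ₁c hτ₁sm hτ₁Top hτ₁Bot
  set g₁ : ℝ → ℝ := fun s => Real.log (Φ₁ (σ₁ s)) with hg₁def
  have hg₁c : Continuous g₁ := (hΦ₁c.comp hσ₁c).log fun s => (hΦ₁pos _).ne'
  -- stage-2 flatness
  have flat2 : ∀ ε > (0:ℝ), ∀ᶠ s in atTop, ∀ u ∈ Set.Icc (0:ℝ) 2,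
      |g₁ (s+u) - g₁ s| ≤ ε := by
    intro ε hε
    obtain ⟨X, hX⟩ := (Metric.tendsto_nhds.1 hη0 (ε/4) (by linarith)).exists_forall_of_atTop
    filter_upwards [eventually_ge_atTop (τ₁ X)] with s hs u hu
    have htX : X ≤ σ₁ s := by
      have h1 : τ₁ X ≤ τ₁ (σ₁ s) := by rw [hτ₁σ₁]; exact hs
      exact hτ₁sm.le_iff_le.1 h1
    have hty : σ₁ s ≤ σ₁ (s+u) := hσ₁mono (by linarith [hu.1])
    have hlogder : ∀ r ∈ Set.uIcc (σ₁ s) (σ₁ (s+u)),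
        HasDerivAt (fun z => Real.log (Φ₁ z)) (η r * (Φ₁ r)⁻¹) r := by
      intro r _
      have := (hΦ₁der r).log (hΦ₁pos r).ne'
      rwa [div_eq_mul_inv] at this
    have hηΦcont : Continuous (fun r => η r * (Φ₁ r)⁻¹) :=
      hηc.mul (hΦ₁c.inv₀ fun z => (hΦ₁pos z).ne')
    have hint : (∫ r in (σ₁ s)..(σ₁ (s+u)), η r * (Φ₁ r)⁻¹)
        = Real.log (Φ₁ (σ₁ (s+u))) - Real.log (Φ₁ (σ₁ s)) :=
      intervalIntegral.integral_eq_sub_of_hasDerivAt hlogder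
        (hηΦcont.intervalIntegrable _ _)
    have hτdiff : (∫ r in (σ₁ s)..(σ₁ (s+u)), (Φ₁ r)⁻¹) = u := by
      have h1 := tch_sub hΦ₁c hΦ₁pos (σ₁ s) (σ₁ (s+u))
      have h2 : tch Φ₁ (σ₁ (s+u)) = s + u := hτ₁σ₁ (s+u)
      have h3 : tch Φ₁ (σ₁ s) = s := hτ₁σ₁ s
      rw [h2, h3] at h1
      linarith
    have hbound : ∀ r ∈ Set.Icc (σ₁ s) (σ₁ (s+u)), |η r| ≤ ε/4 := by
      intro r hr
      have := hX r (le_trans htX hr.1)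
      rw [Real.dist_eq, sub_zero] at this
      exact this.le
    have hinv_int : IntervalIntegrable (fun r => (Φ₁ r)⁻¹) volume (σ₁ s) (σ₁ (s+u)) :=
      (hΦ₁c.inv₀ fun z => (hΦ₁pos z).ne').intervalIntegrable _ _
    have hup : (∫ r in (σ₁ s)..(σ₁ (s+u)), η r * (Φ₁ r)⁻¹)
        ≤ (ε/4) * u := by
      have hm : (∫ r in (σ₁ s)..(σ₁ (s+u)), η r * (Φ₁ r)⁻¹)
          ≤ ∫ r in (σ₁ s)..(σ₁ (s+u)), (ε/4) * (Φ₁ r)⁻¹ := by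
        apply intervalIntegral.integral_mono_on hty
          (hηΦcont.intervalIntegrable _ _) ((continuous_const.mul
            (hΦ₁c.inv₀ fun z => (hΦ₁pos z).ne')).intervalIntegrable _ _)
        intro r hr
        exact mul_le_mul_of_nonneg_right (le_of_abs_le (hbound r hr))
          (inv_pos.2 (hΦ₁pos r)).le
      rw [intervalIntegral.integral_const_mul, hτdiff] at hm
      exact hm
    have hlo : -((ε/4) * u) ≤ ∫ r in (σ₁ s)..(σ₁ (s+u)), η r * (Φ₁ r)⁻¹ := by
      have hm : (∫ r in (σ₁ s)..(σ₁ (s+u)), (-(ε/4)) * (Φ₁ r)⁻¹)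
          ≤ ∫ r in (σ₁ s)..(σ₁ (s+u)), η r * (Φ₁ r)⁻¹ := by
        apply intervalIntegral.integral_mono_on hty
          ((continuous_const.mul
            (hΦ₁c.inv₀ fun z => (hΦ₁pos z).ne')).intervalIntegrable _ _)
          (hηΦcont.intervalIntegrable _ _)
        intro r hr
        have := neg_abs_le (η r)
        have h5 := hbound r hr
        have h6 := (inv_pos.2 (hΦ₁pos r)).le
        show -(ε/4) * (Φ₁ r)⁻¹ ≤ η r * (Φ₁ r)⁻¹
        nlinarith
      rw [intervalIntegral.integral_const_mul, hτdiff] at hm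
      linarith
    have habs : |g₁ (s+u) - g₁ s| ≤ (ε/4) * u := by
      have : g₁ (s+u) - g₁ s = ∫ r in (σ₁ s)..(σ₁ (s+u)), η r * (Φ₁ r)⁻¹ := by
        rw [hint]
      rw [this]
      exact abs_le.2 ⟨by linarith, by linarith⟩
    calc |g₁ (s+u) - g₁ s| ≤ (ε/4) * u := habs
      _ ≤ (ε/4) * 2 := by
          apply mul_le_mul_of_nonneg_left hu.2 (by linarith)
      _ ≤ ε := by linarith
  -- second averaging
  set G₁ : ℝ → ℝ := mavg g₁ with hG₁def
  have hG₁c : Continuous G₁ := mavg_continuous hg₁c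
  set G₂ : ℝ → ℝ := mavg G₁ with hG₂def
  set D₂ : ℝ → ℝ := fun s => G₁ (s+1) - G₁ s with hD₂def
  have hG₂der : ∀ s, HasDerivAt G₂ (D₂ s) s := fun s => mavg_hasDerivAt hG₁c s
  have hG₁CD : ContDiff ℝ 1 G₁ := by
    rw [contDiff_one_iff_deriv]
    refine ⟨fun s => (mavg_hasDerivAt hg₁c s).differentiableAt, ?_⟩
    have h1 : deriv G₁ = fun s => g₁ (s+1) - g₁ s :=
      funext fun s => (mavg_hasDerivAt hg₁c s).deriv
    rw [h1]
    exact (hg₁c.comp (continuous_id.add continuous_const)).sub hg₁c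
  have hD₂CD : ContDiff ℝ 1 D₂ := (hG₁CD.comp (contDiff_id.add contDiff_const)).sub hG₁CD
  have hG₂CD : ContDiff ℝ 1 G₂ := by
    rw [contDiff_one_iff_deriv]
    refine ⟨fun s => (hG₂der s).differentiableAt, ?_⟩
    have h1 : deriv G₂ = D₂ := funext fun s => (hG₂der s).deriv
    rw [h1]; exact hD₂CD.continuous
  have hτ₁CD : ContDiff ℝ 1 τ₁ := by
    rw [contDiff_one_iff_deriv]
    refine ⟨fun x => (tch_hasDerivAt hΦ₁c hΦ₁pos x).differentiableAt, ?_⟩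
    have h1 : deriv τ₁ = fun x => (Φ₁ x)⁻¹ :=
      funext fun x => (tch_hasDerivAt hΦ₁c hΦ₁pos x).deriv
    rw [h1]; exact hΦ₁c.inv₀ fun z => (hΦ₁pos z).ne'
  have hG₂g₁ : Tendsto (fun s => G₂ s - g₁ s) atTop (𝓝 0) := by
    rw [Metric.tendsto_nhds]; intro ε hε
    filter_upwards [flat2 (ε/2) (by linarith)] with s hflat
    rw [Real.dist_eq, sub_zero]
    have h1 : |G₂ s - g₁ s| ≤ ε/2 := by
      apply mavg_sub_le hG₁c
      intro r hr
      apply mavg_sub_le hg₁c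
      intro q hq
      have := hflat (q - s) ⟨by linarith [hr.1, hq.1], by linarith [hr.2, hq.2]⟩
      rwa [(by ring : s + (q - s) = q)] at this
    linarith
  have hD₂0 : Tendsto D₂ atTop (𝓝 0) := by
    rw [Metric.tendsto_nhds]; intro ε hε
    filter_upwards [flat2 (ε/3) (by linarith)] with s hflat
    rw [Real.dist_eq, sub_zero]
    have h1 : |G₁ (s+1) - g₁ s| ≤ ε/3 := by
      apply mavg_sub_le hg₁c
      intro q hq
      have := hflat (q - s) ⟨by linarith [hq.1], by linarith [hq.2]⟩
      rwa [(by ring : s + (q - s) = q)] at this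
    have h2 : |G₁ s - g₁ s| ≤ ε/3 := by
      apply mavg_sub_le hg₁c
      intro q hq
      have := hflat (q - s) ⟨by linarith [hq.1], by linarith [hq.2]⟩
      rwa [(by ring : s + (q - s) = q)] at this
    have heq : D₂ s = (G₁ (s+1) - g₁ s) - (G₁ s - g₁ s) := by
      rw [hD₂def]; ring
    rw [heq]
    calc |(G₁ (s+1) - g₁ s) - (G₁ s - g₁ s)|
        ≤ |G₁ (s+1) - g₁ s| + |G₁ s - g₁ s| := abs_sub _ _
      _ ≤ ε/3 + ε/3 := add_le_add h1 h2
      _ < ε := by linarith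
  -- the C¹ integrand
  set e₀ : ℝ → ℝ := fun x => Real.exp (G₂ (τ₁ x)) * (D₂ (τ₁ x) * (Φ₁ x)⁻¹) with he₀def
  have hΦ₂der : ∀ x, HasDerivAt (fun y => Real.exp (G₂ (τ₁ y))) (e₀ x) x := by
    intro x
    have h1 : HasDerivAt (fun y => G₂ (τ₁ y)) (D₂ (τ₁ x) * (Φ₁ x)⁻¹) x :=
      (hG₂der (τ₁ x)).comp x (tch_hasDerivAt hΦ₁c hΦ₁pos x)
    exact (Real.hasDerivAt_exp (G₂ (τ₁ x))).comp x h1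
  have he₀CD : ContDiff ℝ 1 e₀ :=
    (Real.contDiff_exp.comp (hG₂CD.comp hτ₁CD)).mul
      ((hD₂CD.comp hτ₁CD).mul (hΦ₁CD.inv fun x => (hΦ₁pos x).ne'))
  have hg₁τ₁ : ∀ x, g₁ (τ₁ x) = Real.log (Φ₁ x) := by
    intro x; show Real.log (Φ₁ (σ₁ (τ₁ x))) = _; rw [hσ₁τ₁]
  have hinv : ∀ x, (Φ₁ x)⁻¹ = Real.exp (-(g₁ (τ₁ x))) := by
    intro x
    rw [hg₁τ₁, Real.exp_neg, Real.exp_log (hΦ₁pos x)]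
  have he₀eq : ∀ x, e₀ x = Real.exp (G₂ (τ₁ x) - g₁ (τ₁ x)) * D₂ (τ₁ x) := by
    intro x
    have h1 : Real.exp (G₂ (τ₁ x) - g₁ (τ₁ x))
        = Real.exp (G₂ (τ₁ x)) * Real.exp (-(g₁ (τ₁ x))) := by
      rw [← Real.exp_add]; ring_nf
    rw [he₀def]
    simp only []
    rw [hinv x, h1]
    ring
  have he₀0 : Tendsto e₀ atTop (𝓝 0) := by
    have h1 : Tendsto (fun x => Real.exp (G₂ (τ₁ x) - g₁ (τ₁ x))) atTop (𝓝 1) := by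
      have := (Real.continuous_exp.tendsto 0).comp (hG₂g₁.comp hτ₁Top)
      rwa [Real.exp_zero] at this
    have h2 := h1.mul (hD₂0.comp hτ₁Top)
    rw [mul_zero] at h2
    exact h2.congr fun x => (he₀eq x).symm
  have hΦ₂Φ₁ : Tendsto (fun x => Real.exp (G₂ (τ₁ x)) / Φ₁ x) atTop (𝓝 1) := by
    have h1 : ∀ x, Real.exp (G₂ (τ₁ x)) / Φ₁ x = Real.exp (G₂ (τ₁ x) - g₁ (τ₁ x)) := by
      intro x
      rw [Real.exp_sub, hg₁τ₁, Real.exp_log (hΦ₁pos x)]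
    have h2 := (Real.continuous_exp.tendsto 0).comp (hG₂g₁.comp hτ₁Top)
    rw [Real.exp_zero] at h2
    exact h2.congr fun x => (h1 x).symm
  have haΦ₂ : Tendsto (fun x => a x / Real.exp (G₂ (τ₁ x))) atTop (𝓝 1) := by
    have h1 : Tendsto (fun x => b x / Φ₁ x) atTop (𝓝 1) := by
      have h0 := hΦ₁b.inv₀ one_ne_zero
      rw [inv_one] at h0
      exact h0.congr fun x => by rw [← one_div, one_div_div]
    have h2 : Tendsto (fun x => Φ₁ x / Real.exp (G₂ (τ₁ x))) atTop (𝓝 1) := by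
      have h0 := hΦ₂Φ₁.inv₀ one_ne_zero
      rw [inv_one] at h0
      exact h0.congr fun x => by rw [← one_div, one_div_div]
    have h3 := h1.mul h2
    rw [mul_one] at h3
    apply h3.congr'
    filter_upwards [eventually_ge_atTop (0:ℝ)] with x hx
    have hbx : b x = a x := by show a (max x 0) = a x; rw [max_eq_left hx]
    have h4 : b x / Φ₁ x * (Φ₁ x / Real.exp (G₂ (τ₁ x)))
        = b x / Real.exp (G₂ (τ₁ x)) := by
      field_simp
      exact mul_div_cancel_right₀ _ (hΦ₁pos x).ne'
    rw [h4, hbx]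
  -- cutoff and conclusion
  have hχCD : ContDiff ℝ 2 Real.smoothTransition := Real.smoothTransition.contDiff
  have hχdiff : Differentiable ℝ Real.smoothTransition := hχCD.differentiable (by norm_num)
  have hχ'CD : ContDiff ℝ 1 (deriv Real.smoothTransition) :=
    ((contDiff_succ_iff_deriv (n := 1)).1 (by exact_mod_cast hχCD)).2.2
  set e : ℝ → ℝ := fun x =>
    deriv Real.smoothTransition x * Real.exp (G₂ (τ₁ x))
      + Real.smoothTransition x * e₀ x with hedef
  have heCD : ContDiff ℝ 1 e :=
    (hχ'CD.mul (Real.contDiff_exp.comp (hG₂CD.comp hτ₁CD))).add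
      ((hχCD.of_le (by norm_num)).mul he₀CD)
  have hFder : ∀ x, HasDerivAt
      (fun y => Real.smoothTransition y * Real.exp (G₂ (τ₁ y))) (e x) x :=
    fun x => ((hχdiff x).hasDerivAt).mul (hΦ₂der x)
  have hint : ∀ x, (∫ u in (0:ℝ)..x, e u)
      = Real.smoothTransition x * Real.exp (G₂ (τ₁ x)) := by
    intro x
    have h1 := intervalIntegral.integral_eq_sub_of_hasDerivAt
      (a := (0:ℝ)) (b := x)
      (f := fun y => Real.smoothTransition y * Real.exp (G₂ (τ₁ y))) (f' := e)
      (fun r _ => hFder r) (heCD.continuous.intervalIntegrable _ _)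
    rw [h1]
    simp [Real.smoothTransition.zero_of_nonpos le_rfl]
  have he0 : Tendsto e atTop (𝓝 0) := by
    apply he₀0.congr'
    filter_upwards [eventually_gt_atTop (1:ℝ)] with x hx
    have hχ1 : deriv Real.smoothTransition x = 0 := by
      have hev : Real.smoothTransition =ᶠ[𝓝 x] fun _ => 1 := by
        filter_upwards [Ioi_mem_nhds hx] with y hy
        exact Real.smoothTransition.one_of_one_le (le_of_lt hy)
      rw [hev.deriv_eq, deriv_const]
    rw [hedef]
    simp only []
    rw [hχ1, zero_mul, zero_add, Real.smoothTransition.one_of_one_le hx.le, one_mul]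
  refine ⟨1, one_pos, e, heCD, he0,
    fun x => a x / Real.exp (G₂ (τ₁ x)), haΦ₂, ?_⟩
  filter_upwards [eventually_ge_atTop (1:ℝ)] with x hx
  rw [hint x, Real.smoothTransition.one_of_one_le hx, one_mul, one_mul,
    div_mul_cancel₀ _ (Real.exp_pos _).ne']

end Main

-- Cesàro-type : if e → 0 then (∫₀^x e)/x → 0
lemma prim_div_tendsto_zero {e : ℝ → ℝ} (he : Continuous e)
    (h0 : Tendsto e atTop (𝓝 0)) :
    Tendsto (fun x => prim e x / x) atTop (𝓝 0) := by
  rw [Metric.tendsto_nhds]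
  intro ε hε
  obtain ⟨X, hX⟩ := (Metric.tendsto_nhds.1 h0 (ε/4) (by linarith)).exists_forall_of_atTop
  have hbound : ∀ x ≥ X, |prim e x - prim e X| ≤ ε/4 * (x - X) := by
    intro x hx
    have : prim e x - prim e X = ∫ t in X..x, e t := by
      simp only [prim]
      have := intervalIntegral.integral_add_adjacent_intervals
        (he.intervalIntegrable 0 X : IntervalIntegrable e volume 0 X)
        (he.intervalIntegrable X x : IntervalIntegrable e volume X x)
      linarith
    rw [this]
    have := intervalIntegral.norm_integral_le_of_norm_le_const
      (C := ε/4) (f := e) (a := X) (b := x) ?_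
    · rwa [Real.norm_eq_abs, abs_of_nonneg (by linarith : (0:ℝ) ≤ x - X)] at this
    · intro y hy
      rw [Set.uIoc_of_le hx] at hy
      exact le_of_lt (by simpa [Real.dist_eq, abs_sub_comm] using hX y (le_of_lt hy.1))
  have hev : ∀ᶠ x in atTop, dist (prim e x / x) 0 < ε := by
    have h1 : ∀ᶠ x in atTop, (1:ℝ) ≤ x := eventually_ge_atTop 1
    have h2 : ∀ᶠ x in atTop, X ≤ x := eventually_ge_atTop X
    have h3 : ∀ᶠ x in atTop, (|prim e X| + ε/4 * |X|) / (ε/4) ≤ x := eventually_ge_atTop _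
    filter_upwards [h1, h2, h3] with x hx1 hx2 hx3
    have hxpos : (0:ℝ) < x := by linarith
    rw [Real.dist_eq, sub_zero, abs_div, abs_of_pos hxpos, div_lt_iff₀ hxpos]
    have hb := hbound x hx2
    have : |prim e x| ≤ |prim e X| + ε/4 * (x - X) := by
      have := abs_sub_abs_le_abs_sub (prim e x) (prim e X)
      linarith
    have hX' : ε/4 * (x - X) ≤ ε/4 * x + ε/4 * |X| := by
      have : -|X| ≤ X := neg_abs_le X
      nlinarith
    have h4 : |prim e X| + ε/4 * |X| ≤ ε/4 * x := by
      have := hx3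
      rw [div_le_iff₀ (by linarith : (0:ℝ) < ε/4)] at this
      linarith
    nlinarith
  exact hev

lemma backward (a : ℝ → ℝ) (hpos : ∀ t, 0 < a t)
    (c : ℝ) (hc : 0 < c) (e : ℝ → ℝ) (he : Continuous e) (he0 : Tendsto e atTop (𝓝 0))
    (h : ℝ → ℝ) (hh : Tendsto h atTop (𝓝 1))
    (hrep : ∀ᶠ x in atTop, a x = c * h x * prim e x) :
    SelfNeglecting a := by
  refine ⟨hpos, fun K hK => ?_⟩
  -- bound K
  obtain ⟨r, hr⟩ := hK.isBounded.subset_closedBall 0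
  set M : ℝ := max r 1 with hM
  have hM1 : (1:ℝ) ≤ M := le_max_right _ _
  have hKM : K ⊆ Set.Icc (-M) M := by
    intro x hx
    have := hr hx
    rw [Metric.mem_closedBall, Real.dist_eq, sub_zero] at this
    have := abs_le.1 this
    constructor <;>
      [exact le_trans (neg_le_neg (le_max_left r 1)) this.1;
       exact le_trans this.2 (le_max_left r 1)]
  -- a x / x → 0
  have hΦdiv := prim_div_tendsto_zero he he0
  have hadiv : Tendsto (fun x => a x / x) atTop (𝓝 0) := by
    have : Tendsto (fun x => c * h x * (prim e x / x)) atTop (𝓝 (c * 1 * 0)) :=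
      ((tendsto_const_nhds.mul hh).mul hΦdiv)
    rw [mul_zero] at this
    apply this.congr'
    filter_upwards [hrep] with x hx
    rw [hx, mul_div_assoc]
  rw [Metric.tendstoUniformlyOn_iff]
  intro ε hε
  have hcM : (0:ℝ) < 8 + 12 * c * M := by positivity
  obtain ⟨δ, hδpos, hδhalf, hδε⟩ : ∃ δ : ℝ, 0 < δ ∧ δ ≤ 1/2 ∧ δ * (4 + 6 * c * M) < ε := by
    refine ⟨min (1/2) (ε / (8 + 12 * c * M)), lt_min (by norm_num) (by positivity),
      min_le_left _ _, ?_⟩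
    have h1 : min (1/2) (ε / (8 + 12 * c * M)) ≤ ε / (8 + 12 * c * M) := min_le_right _ _
    have h2 : min (1/2) (ε / (8 + 12 * c * M)) * (8 + 12 * c * M) ≤ ε := by
      rw [← le_div_iff₀ hcM]; exact h1
    have h3 : 0 < min (1/2) (ε / (8 + 12 * c * M)) := lt_min (by norm_num) (by positivity)
    nlinarith
  -- choose Y
  have hhy : ∀ᶠ y in atTop, |h y - 1| ≤ δ := by
    have := Metric.tendsto_nhds.1 hh δ hδpos
    filter_upwards [this] with y hy
    rw [Real.dist_eq] at hy; exact le_of_lt hy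
  have hey : ∀ᶠ y in atTop, |e y| ≤ δ := by
    have := Metric.tendsto_nhds.1 he0 δ hδpos
    filter_upwards [this] with y hy
    rw [Real.dist_eq, sub_zero] at hy
    exact le_of_lt hy
  obtain ⟨Y, hY⟩ := (hhy.and (hey.and hrep)).exists_forall_of_atTop
  -- eventual smallness of a t / t
  have hasmall : ∀ᶠ t in atTop, a t / t ≤ 1 / (2 * M) := by
    have := Metric.tendsto_nhds.1 hadiv (1/(2*M)) (by positivity)
    filter_upwards [this] with t ht
    rw [Real.dist_eq, sub_zero] at ht
    exact le_of_lt (lt_of_abs_lt ht)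
  filter_upwards [hasmall, eventually_ge_atTop (max (2 * Y) (2 * |Y| + 1)),
    eventually_gt_atTop 0] with t hsmall ht htpos
  have htY : 2 * Y ≤ t := le_trans (le_max_left _ _) ht
  have htY' : 2 * |Y| + 1 ≤ t := le_trans (le_max_right _ _) ht
  have hat : a t ≤ t / (2 * M) := by
    rw [div_le_div_iff₀ htpos (by positivity : (0:ℝ) < 2*M)] at hsmall
    calc a t = a t * (2*M) / (2*M) := by field_simp
      _ ≤ t / (2*M) := by
          apply div_le_div_of_nonneg_right _ (by positivity)
          linarith [hsmall]
  intro x hx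
  obtain ⟨hx1, hx2⟩ := hKM hx
  set s : ℝ := t + x * a t with hs
  have hssub : |s - t| ≤ M * a t := by
    rw [hs]
    simp only [add_sub_cancel_left]
    rw [abs_mul, abs_of_pos (hpos t)]
    exact mul_le_mul_of_nonneg_right (abs_le.2 ⟨hx1, hx2⟩) (le_of_lt (hpos t))
  have hMat : M * a t ≤ t / 2 := by
    calc M * a t ≤ M * (t / (2*M)) := mul_le_mul_of_nonneg_left hat (by linarith)
      _ = t / 2 := by field_simp
  have hsY : Y ≤ s := by
    have h1 : t - M * a t ≤ s := by
      have := neg_le_of_abs_le hssub; linarith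
    have : t / 2 ≤ s := by linarith
    have : Y ≤ t / 2 := by
      have : Y ≤ |Y| := le_abs_self Y
      linarith
    linarith
  have htY2 : Y ≤ t := by
    have : Y ≤ |Y| := le_abs_self Y
    linarith
  obtain ⟨hht, het', hrept⟩ := hY t htY2
  obtain ⟨hhs, hes', hreps⟩ := hY s hsY
  -- positivity of Φ
  have hht1 : 1 - δ ≤ h t := by have := abs_le.1 hht; linarith
  have hht2 : h t ≤ 1 + δ := by have := abs_le.1 hht; linarith
  have hhs1 : 1 - δ ≤ h s := by have := abs_le.1 hhs; linarith
  have hhs2 : h s ≤ 1 + δ := by have := abs_le.1 hhs; linarith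
  have hhtpos : 0 < h t := by linarith
  have hhspos : 0 < h s := by linarith
  have hΦtpos : 0 < prim e t := by
    by_contra hcon
    push_neg at hcon
    have : a t ≤ 0 := by
      rw [hrept]
      have : 0 ≤ c * h t := by positivity
      exact mul_nonpos_of_nonneg_of_nonpos this hcon
    linarith [hpos t]
  -- |Φ s - Φ t| small
  have hΦdiff : |prim e s - prim e t| ≤ δ * (M * a t) := by
    have heq : prim e s - prim e t = ∫ u in t..s, e u := by
      simp only [prim]
      have := intervalIntegral.integral_add_adjacent_intervals
        (he.intervalIntegrable 0 t : IntervalIntegrable e volume 0 t)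
        (he.intervalIntegrable t s : IntervalIntegrable e volume t s)
      linarith
    rw [heq]
    have hb : ∀ u ∈ Set.uIoc t s, ‖e u‖ ≤ δ := by
      intro u hu
      have humem : min t s ≤ u := le_of_lt hu.1
      have : Y ≤ u := le_trans (le_min htY2 hsY) humem
      exact (hY u this).2.1
    calc |∫ u in t..s, e u| ≤ δ * |s - t| :=
          intervalIntegral.norm_integral_le_of_norm_le_const hb
      _ ≤ δ * (M * a t) := mul_le_mul_of_nonneg_left hssub (le_of_lt hδpos)
  -- a t in terms of Φ t
  have hatΦ : a t = c * h t * prim e t := hrept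
  have hatub : a t ≤ 2 * c * prim e t := by
    rw [hatΦ]
    have h2 : h t ≤ 2 := by linarith
    have := mul_le_mul_of_nonneg_right
      (mul_le_mul_of_nonneg_left h2 hc.le) hΦtpos.le
    linarith
  have hatlb : c / 2 * prim e t ≤ a t := by
    rw [hatΦ]
    have h2 : 1/2 ≤ h t := by linarith
    have := mul_le_mul_of_nonneg_right
      (mul_le_mul_of_nonneg_left h2 hc.le) hΦtpos.le
    linarith
  have hΦdiff2 : |prim e s - prim e t| ≤ 2 * c * M * δ * prim e t := by
    calc |prim e s - prim e t| ≤ δ * (M * a t) := hΦdiff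
      _ ≤ δ * (M * (2 * c * prim e t)) := by
          apply mul_le_mul_of_nonneg_left _ (le_of_lt hδpos)
          exact mul_le_mul_of_nonneg_left hatub (by linarith)
      _ = 2 * c * M * δ * prim e t := by ring
  -- main estimate
  have hkey : |a s - a t| ≤ δ * (2 + 3 * c * M) * (c * prim e t) := by
    rw [hrept, hreps]
    have expand : c * h s * prim e s - c * h t * prim e t
        = c * ((h s - h t) * prim e t + h s * (prim e s - prim e t)) := by ring
    rw [expand, abs_mul, abs_of_pos hc]
    have h1 : |(h s - h t) * prim e t| ≤ 2 * δ * prim e t := by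
      rw [abs_mul, abs_of_pos hΦtpos]
      apply mul_le_mul_of_nonneg_right _ (le_of_lt hΦtpos)
      calc |h s - h t| ≤ |h s - 1| + |1 - h t| := abs_sub_le _ _ _
        _ ≤ δ + δ := by rw [abs_sub_comm 1 (h t)]; exact add_le_add hhs hht
        _ = 2 * δ := by ring
    have h2 : |h s * (prim e s - prim e t)| ≤ (3/2) * (2 * c * M * δ * prim e t) := by
      rw [abs_mul, abs_of_pos hhspos]
      have : h s ≤ 3/2 := by linarith
      calc h s * |prim e s - prim e t| ≤ (3/2) * |prim e s - prim e t| :=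
            mul_le_mul_of_nonneg_right this (abs_nonneg _)
        _ ≤ (3/2) * (2 * c * M * δ * prim e t) := by
            exact mul_le_mul_of_nonneg_left hΦdiff2 (by norm_num)
    calc c * |(h s - h t) * prim e t + h s * (prim e s - prim e t)|
        ≤ c * (|(h s - h t) * prim e t| + |h s * (prim e s - prim e t)|) :=
          mul_le_mul_of_nonneg_left (abs_add_le _ _) (le_of_lt hc)
      _ ≤ c * (2 * δ * prim e t + (3/2) * (2 * c * M * δ * prim e t)) := by
          apply mul_le_mul_of_nonneg_left (add_le_add h1 h2) (le_of_lt hc)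
      _ = δ * (2 + 3 * c * M) * (c * prim e t) := by ring
  have hatlb' : c / 2 * prim e t ≤ a t := hatlb
  rw [Real.dist_eq]
  have : |1 - a s / a t| = |a s - a t| / a t := by
    have h1 : a s / a t - 1 = (a s - a t) / a t := by
      rw [sub_div, div_self (hpos t).ne']
    rw [abs_sub_comm, h1, abs_div, abs_of_pos (hpos t)]
  rw [this]
  have hfin : |a s - a t| / a t ≤ δ * (4 + 6 * c * M) := by
    rw [div_le_iff₀ (hpos t)]
    calc |a s - a t| ≤ δ * (2 + 3 * c * M) * (c * prim e t) := hkey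
      _ = δ * (4 + 6 * c * M) * (c / 2 * prim e t) := by ring
      _ ≤ δ * (4 + 6 * c * M) * a t := by
          apply mul_le_mul_of_nonneg_left hatlb'
          positivity
  linarith [hδε]

end Helpers

/-- **Representation theorem for self-neglecting functions.**  A continuous
`a : ℝ → (0,∞)` is self-neglecting iff for some constant `c > 0`, some `C¹`
function `e` with `e(u) → 0` as `u → ∞`, and some `h` with `h(x) → 1` as
`x → ∞`, one has `a(x) = c · h(x) · ∫_0^x e(u) du` for all large `x`. -/
theorem selfNeglecting_representation (a : ℝ → ℝ)
    (hpos : ∀ t, 0 < a t) (hcont : Continuous a) :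
    SelfNeglecting a ↔
      ∃ c : ℝ, 0 < c ∧
        ∃ e : ℝ → ℝ, ContDiff ℝ 1 e ∧ Tendsto e atTop (𝓝 0) ∧
          ∃ h : ℝ → ℝ, Tendsto h atTop (𝓝 1) ∧
            ∀ᶠ x in atTop, a x = c * h x * ∫ u in (0:ℝ)..x, e u := by
  constructor
  · exact fun hSN => forward hpos hcont hSN
  · rintro ⟨c, hc, e, heCD, he0, h, hh, hrep⟩
    exact backward a hpos c hc e heCD.continuous he0 h hh hrep
end
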